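/- arXiv:1710.04079 — 3 statements merged into one kernel-verified Lean document; each statement's English description precedes it below -/
import Mathlib

section
/- Let A be a nonnegative irreducible tensor of order m and dimension n whose solid graph has r weakly connected components. Then every D ∈ 𝔇^{(0)}(A) satisfies D^{(m-1)^r} = I, and the stabilizing index satisfies s(A) ≤ (m−1)^{r(n−1)}. -/
open scoped BigOperators

namespace PaperTensor

/-- A tensor of order `m` and dimension `|ι|`: entry `A i f` is `a_{i, f 0, …, f (m-2)}`. -/
abbrev Tensor (ι : Type) (m : ℕ) : Type := ι → (Fin (m - 1) → ι) → ℂ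

variable {ι : Type} [Fintype ι] {m : ℕ}

/-- `(A x^{m-1})_i = ∑ a_{i i₂ … i_m} x_{i₂} ⋯ x_{i_m}`. -/
noncomputable def tApp (A : Tensor ι m) (x : ι → ℂ) (i : ι) : ℂ :=
  ∑ f : Fin (m - 1) → ι, A i f * ∏ j, x (f j)

/-- `x ≠ 0` and `A x^{m-1} = l x^{[m-1]}`. -/
def IsEigPair (A : Tensor ι m) (l : ℂ) (x : ι → ℂ) : Prop :=
  x ≠ 0 ∧ ∀ i, tApp A x i = l * x i ^ (m - 1)

def Eigenvalues (A : Tensor ι m) : Set ℂ := {l | ∃ x, IsEigPair A l x}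

/-- The spectral radius: the largest modulus of an eigenvalue. -/
noncomputable def specRad (A : Tensor ι m) : ℝ := sSup ((fun z : ℂ => ‖z‖) '' Eigenvalues A)

/-- All entries are nonnegative reals. -/
def Nonneg (A : Tensor ι m) : Prop := ∀ i f, ∃ r : ℝ, 0 ≤ r ∧ A i f = (r : ℂ)

/-- Arc `(i,j)` of the directed graph `G(A)`. -/
def Arc (A : Tensor ι m) (i j : ι) : Prop := ∃ f, A i f ≠ 0 ∧ ∃ k, f k = j

/-- `G(A)` is strongly connected. -/
def WeaklyIrreducible (A : Tensor ι m) : Prop :=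
  ∀ i j : ι, Relation.ReflTransGen (Arc A) i j

/-- The projective eigenvariety `PV_l(A) ⊆ ℙ^{n-1}`. -/
def PV (A : Tensor ι m) (l : ℂ) : Set (Projectivization ℂ (ι → ℂ)) :=
  {p | ∃ (v : ι → ℂ) (hv : v ≠ 0), Projectivization.mk ℂ v hv = p ∧
        ∀ i, tApp A v i = l * v i ^ (m - 1)}

/-- `(D^{-(m-1)} A D)_{i₁…i_m} = d_{i₁}^{-(m-1)} a_{i₁…i_m} d_{i₂} ⋯ d_{i_m}`. -/
noncomputable def diagConj (d : ι → ℂ) (A : Tensor ι m) : Tensor ι m :=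
  fun i f => (d i)⁻¹ ^ (m - 1) * A i f * ∏ j, d (f j)

/-- Combinatorial symmetry: the support is invariant under permutations of indices. -/
def CombSymm (A : Tensor ι m) : Prop :=
  ∀ i f i' f', (i ::ₘ Multiset.map f Finset.univ.val) = (i' ::ₘ Multiset.map f' Finset.univ.val) →
    (A i f ≠ 0 ↔ A i' f' ≠ 0)

/-- Irreducibility of a tensor. -/
def Irred (A : Tensor ι m) : Prop :=
  ¬ ∃ S : Set ι, S.Nonempty ∧ S ≠ Set.univ ∧
      ∀ i ∈ S, ∀ f : Fin (m - 1) → ι, (∀ j, f j ∉ S) → A i f = 0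

/-- Solid arc: `(i,j)` arising from a nonzero entry `a_{ij…j}`. -/
def SolidArc (A : Tensor ι m) (i j : ι) : Prop := A i (fun _ => j) ≠ 0

/-- Spectral `ℓ`-symmetry: `Spec(A) = e^{2πi/ℓ} Spec(A)`. -/
def SpectralSymm (A : Tensor ι m) (ℓ : ℕ) : Prop :=
  Eigenvalues A = (fun z => Complex.exp ((2 * Real.pi / ℓ : ℝ) * Complex.I) * z) '' Eigenvalues A

/-- The set `𝔇^{(j)}(A)` (for the given `ℓ`), as diagonal matrices recorded by their diagonals. -/
def Dgj {n m : ℕ} [NeZero n] (A : Tensor (Fin n) m) (ℓ j : ℕ) : Set (Fin n → ℂ) :=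
  {d | (∀ i, d i ≠ 0) ∧ d 0 = 1 ∧
    ∀ i f, A i f = Complex.exp (-(2 * Real.pi * j / ℓ : ℝ) * Complex.I) * diagConj d A i f}

/-- The group `𝔇(A) = ⋃_{j=0}^{ℓ-1} 𝔇^{(j)}(A)`. -/
def DgAll {n m : ℕ} [NeZero n] (A : Tensor (Fin n) m) (ℓ : ℕ) : Set (Fin n → ℂ) :=
  {d | ∃ j < ℓ, d ∈ Dgj A ℓ j}

/-- `𝔇^{(0)}(A)`. -/
def Dg0 {n m : ℕ} [NeZero n] (A : Tensor (Fin n) m) : Set (Fin n → ℂ) :=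
  {d | (∀ i, d i ≠ 0) ∧ d 0 = 1 ∧ ∀ i f, A i f = diagConj d A i f}

/-- Restriction (principal subtensor) of `A` to a set `S` of indices. -/
def restrict (A : Tensor ι m) (S : Set ι) : Tensor S m :=
  fun i f => A i.1 (fun j => (f j).1)

lemma chainLemma {Q : Type} [Fintype Q] (p : ℕ) (c : Q → ℂ) (t : Q)
    (H : ∀ S : Set Q, S.Nonempty → S ≠ Set.univ →
      ∃ q ∈ S, ∃ g : Fin p → Q, (∀ j, g j ∉ S) ∧ c q ^ p = ∏ j, c (g j)) :
    ∀ q, c q ^ p ^ (Fintype.card Q - 1) = c t ^ p ^ (Fintype.card Q - 1) := by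
  classical
  have key : ∀ k : ℕ, ∃ T : Finset Q, t ∈ T ∧ min (k + 1) (Fintype.card Q) ≤ T.card ∧
      ∀ q ∈ T, c q ^ p ^ k = c t ^ p ^ k := by
    intro k
    induction k with
    | zero =>
      refine ⟨{t}, Finset.mem_singleton_self t, ?_, ?_⟩
      · simp
      · intro q hq; rw [Finset.mem_singleton] at hq; rw [hq]
    | succ k ih =>
      obtain ⟨T, htT, hcard, hpow⟩ := ih
      by_cases hU : T = Finset.univ
      · refine ⟨T, htT, ?_, ?_⟩
        · subst hU; simp
        · intro q hq
          rw [pow_succ, pow_mul, pow_mul, hpow q hq]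
      · have hq0 : ∃ q0, q0 ∉ T := by
          by_contra h; push_neg at h; exact hU (Finset.eq_univ_iff_forall.mpr h)
        obtain ⟨q0, hq0⟩ := hq0
        obtain ⟨q, hqS, g, hg, hrel⟩ := H (↑T)ᶜ ⟨q0, by simpa using hq0⟩
          (fun h => by
            have ht' : t ∈ ((↑T)ᶜ : Set Q) := h ▸ Set.mem_univ t
            exact ht' (by simpa using htT))
        have hgT : ∀ j, g j ∈ T := by
          intro j; have := hg j; simpa using this
        have hqnew : c q ^ p ^ (k + 1) = c t ^ p ^ (k + 1) := by
          have h1 : c q ^ p ^ (k + 1) = (c q ^ p) ^ p ^ k := by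
            rw [← pow_mul, pow_succ']
          rw [h1, hrel, ← Finset.prod_pow]
          have h2 : ∀ j ∈ (Finset.univ : Finset (Fin p)), c (g j) ^ p ^ k = c t ^ p ^ k :=
            fun j _ => hpow (g j) (hgT j)
          rw [Finset.prod_congr rfl h2, Finset.prod_const, Finset.card_univ,
            Fintype.card_fin, ← pow_mul, ← pow_succ]
        have hqT : q ∉ T := by simpa using hqS
        refine ⟨insert q T, Finset.mem_insert_of_mem htT, ?_, ?_⟩
        · rw [Finset.card_insert_of_notMem hqT]
          have hle : T.card ≤ Fintype.card Q := Finset.card_le_univ T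
          omega
        · intro q' hq'
          rcases Finset.mem_insert.mp hq' with h | h
          · rw [h]; exact hqnew
          · rw [pow_succ, pow_mul, pow_mul, hpow q' h]
  intro q
  obtain ⟨T, htT, hcard, hpow⟩ := key (Fintype.card Q - 1)
  have hpos : 1 ≤ Fintype.card Q := Fintype.card_pos_iff.mpr ⟨q⟩
  have hT : T = Finset.univ :=
    Finset.eq_univ_of_card T (le_antisymm (Finset.card_le_univ T) (by omega))
  exact hpow q (hT ▸ Finset.mem_univ q)

/-- If `A` is nonnegative irreducible with `r` weakly connected components of its solid
graph, then every `D ∈ 𝔇^{(0)}(A)` satisfies `D^{(m-1)^r} = I`, and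
`s(A) ≤ (m-1)^{r(n-1)}`. -/
theorem stmt14 {n m r : ℕ} [NeZero n] (hm : 2 ≤ m) (A : Tensor (Fin n) m)
    (hA : Nonneg A) (hirr : Irred A)
    (hr : Nat.card (Quot (fun a b : Fin n => SolidArc A a b ∨ SolidArc A b a)) = r) :
    (∀ d ∈ Dg0 A, d ^ ((m - 1) ^ r) = (1 : Fin n → ℂ)) ∧
    (Dg0 A).ncard ≤ (m - 1) ^ (r * (n - 1)) := by
  classical
  set p := m - 1 with hpdef
  have hp1 : 1 ≤ p := by omega
  set rel : Fin n → Fin n → Prop := fun a b => SolidArc A a b ∨ SolidArc A b a with hreldef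
  letI : Fintype (Quot rel) := Fintype.ofFinite _
  have hrcard : Fintype.card (Quot rel) = r := by
    rw [← Nat.card_eq_fintype_card]; exact hr
  have hr1 : 1 ≤ r := by
    rw [← hrcard]
    exact Fintype.card_pos_iff.mpr ⟨Quot.mk rel 0⟩
  have main : ∀ d ∈ Dg0 A, ∀ i, d i ^ p ^ r = 1 := by
    intro d hd
    obtain ⟨hd0, hd1, hdrel⟩ := hd
    have stepA : ∀ i f, A i f ≠ 0 → ∏ j, d (f j) = d i ^ p := by
      intro i f hne
      have h := hdrel i f
      rw [diagConj] at h
      have h2 : A i f * ((d i)⁻¹ ^ (m - 1) * ∏ j, d (f j)) = A i f * 1 := by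
        rw [mul_one]; linear_combination -h
      have h3 := mul_left_cancel₀ hne h2
      rw [inv_pow] at h3
      exact ((inv_mul_eq_one₀ (pow_ne_zero _ (hd0 i))).mp h3).symm
    have hsolid : ∀ a b, rel a b → d a ^ p = d b ^ p := by
      have key : ∀ a b : Fin n, SolidArc A a b → d a ^ p = d b ^ p := by
        intro a b hab
        have h := stepA a (fun _ => b) hab
        rw [Finset.prod_const, Finset.card_univ, Fintype.card_fin] at h
        exact h.symm
      intro a b hab
      rcases hab with h | h
      · exact key a b h
      · exact (key b a h).symm
    set c : Quot rel → ℂ := Quot.lift (fun i => d i ^ p) hsolid with hcdef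
    have hc : ∀ i, c (Quot.mk rel i) = d i ^ p := fun i => rfl
    have H : ∀ S : Set (Quot rel), S.Nonempty → S ≠ Set.univ →
        ∃ q ∈ S, ∃ g : Fin p → Quot rel, (∀ j, g j ∉ S) ∧ c q ^ p = ∏ j, c (g j) := by
      intro S hSne hSuniv
      set S' : Set (Fin n) := Quot.mk rel ⁻¹' S with hS'def
      have hS'ne : S'.Nonempty := by
        obtain ⟨q, hq⟩ := hSne
        obtain ⟨i, hi⟩ := Quot.exists_rep q
        exact ⟨i, by rw [hS'def]; simp only [Set.mem_preimage]; rw [hi]; exact hq⟩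
      have hS'uni : S' ≠ Set.univ := by
        obtain ⟨q, hq⟩ : ∃ q, q ∉ S := by
          by_contra h; push_neg at h; exact hSuniv (Set.eq_univ_iff_forall.mpr h)
        obtain ⟨i, hi⟩ := Quot.exists_rep q
        intro h
        apply hq
        rw [← hi]
        exact (Set.eq_univ_iff_forall.mp h i : _)
      have hnot : ¬ ∀ i ∈ S', ∀ f : Fin (m - 1) → Fin n, (∀ j, f j ∉ S') → A i f = 0 :=
        fun hcon => hirr ⟨S', hS'ne, hS'uni, hcon⟩
      push_neg at hnot
      obtain ⟨i, hiS', f, hf, hAne⟩ := hnot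
      refine ⟨Quot.mk rel i, hiS', fun j => Quot.mk rel (f j), fun j => hf j, ?_⟩
      rw [hc]
      calc (d i ^ p) ^ p = (∏ j, d (f j)) ^ p := by rw [stepA i f hAne]
        _ = ∏ j, (d (f j)) ^ p := by rw [Finset.prod_pow]
        _ = ∏ j, c (Quot.mk rel (f j)) := rfl
    have hchain := chainLemma p c (Quot.mk rel 0) H
    intro i
    have h1 : c (Quot.mk rel i) ^ p ^ (r - 1) = 1 := by
      have h := hchain (Quot.mk rel i)
      rw [hrcard] at h
      rw [h, hc, hd1, one_pow, one_pow]
    have hexp : p ^ r = p * p ^ (r - 1) := by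
      conv_lhs => rw [show r = (r - 1) + 1 by omega]
      rw [pow_succ']
    rw [hexp, pow_mul]
    exact h1
  refine ⟨fun d hd => funext fun i => by
      rw [Pi.pow_apply, Pi.one_apply]; exact main d hd i, ?_⟩
  set N := p ^ r with hNdef
  have hN1 : 1 ≤ N := Nat.one_le_pow _ _ (by omega)
  set R : Set ℂ := {z : ℂ | z ^ N = 1} with hRdef
  have hRsub : R ⊆ ↑((Polynomial.nthRoots N (1 : ℂ)).toFinset) := by
    intro z hz
    rw [Finset.mem_coe, Multiset.mem_toFinset, Polynomial.mem_nthRoots (by omega : 0 < N)]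
    exact hz
  have hRfin : R.Finite := Set.Finite.subset (Finset.finite_toSet _) hRsub
  have hRcard : Nat.card R ≤ N := by
    rw [Nat.card_coe_set_eq]
    calc R.ncard ≤ (↑((Polynomial.nthRoots N (1 : ℂ)).toFinset) : Set ℂ).ncard :=
          Set.ncard_le_ncard hRsub (Finset.finite_toSet _)
      _ = ((Polynomial.nthRoots N (1 : ℂ)).toFinset).card := Set.ncard_coe_finset _
      _ ≤ Multiset.card (Polynomial.nthRoots N (1 : ℂ)) := Multiset.toFinset_card_le _
      _ ≤ N := Polynomial.card_nthRoots _ _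
  set T : Set (Fin n → ℂ) := {d | d 0 = 1 ∧ ∀ i, d i ∈ R} with hTdef
  have hTsub : Dg0 A ⊆ T := by
    intro d hd
    exact ⟨hd.2.1, fun i => main d hd i⟩
  haveI : Finite ↥R := hRfin.to_subtype
  set φ : ↥T → ({i : Fin n // i ≠ 0} → ↥R) :=
    fun d i => ⟨d.1 i.1, d.2.2 i.1⟩ with hφdef
  have hφinj : Function.Injective φ := by
    intro d d' h
    apply Subtype.ext
    funext i
    by_cases hi : i = 0
    · rw [hi, d.2.1, d'.2.1]
    · exact congrArg Subtype.val (congrFun h ⟨i, hi⟩)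
  haveI hTfin : Finite ↥T := Finite.of_injective φ hφinj
  have hcard1 : Nat.card ↥T ≤ Nat.card ({i : Fin n // i ≠ 0} → ↥R) :=
    Nat.card_le_card_of_injective φ hφinj
  have hcard2 : Nat.card ({i : Fin n // i ≠ 0} → ↥R)
      = Nat.card ↥R ^ Nat.card {i : Fin n // i ≠ 0} := Nat.card_fun
  have hcard3 : Nat.card {i : Fin n // i ≠ 0} = n - 1 := by
    rw [Nat.card_eq_fintype_card]
    have := Fintype.card_subtype_compl (fun i : Fin n => i = 0)
    simp only [Fintype.card_fin, Fintype.card_subtype_eq] at this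
    convert this using 2
  calc (Dg0 A).ncard ≤ T.ncard := Set.ncard_le_ncard hTsub (Set.finite_coe_iff.mp hTfin)
    _ = Nat.card ↥T := (Nat.card_coe_set_eq T).symm
    _ ≤ Nat.card ↥R ^ (n - 1) := by rw [← hcard3, ← hcard2]; exact hcard1
    _ ≤ N ^ (n - 1) := Nat.pow_le_pow_left hRcard _
    _ = p ^ (r * (n - 1)) := by rw [hNdef, ← pow_mul]

end PaperTensor
end

section
/- Let A be a nonnegative tensor of order m and dimension n with block upper-triangular structure with respect to classes α₁,…,α_s (i.e., A[α_{i₁}|α_{i₂}|⋯|α_{i_m}] ≠ 0 only when i₁ ≤ i_j for all j = 2,…,m). Then ρ(A[α_i]) ≤ ρ(A) for every i, and if x is an eigenvector of A corresponding to ρ(A), there exists at least one index i with ρ(A[α_i]) = ρ(A) and x[α_i] ≠ 0. -/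
open scoped BigOperators

namespace PaperTensor

variable {ι : Type} [Fintype ι] {m : ℕ}

attribute [local instance] Classical.propDecidable

section ProjZero
open MvPolynomial

private lemma degree_sum_univ {τ : Type} [Fintype τ] (sf : τ →₀ ℕ) : sf.degree = ∑ j, sf j :=
  Finset.sum_subset (Finset.subset_univ _) (fun j _ hj => Finsupp.notMem_support_iff.1 hj)

private lemma hc_homog {τ : Type} {e nn : ℕ} {q : MvPolynomial τ ℂ} (hq : q.IsHomogeneous e) :
    homogeneousComponent nn q = if nn = e then q else 0 :=
  homogeneousComponent_of_mem hq

private lemma hc_mul {τ : Type} {d N : ℕ} (hdN : d ≤ N) {p : MvPolynomial τ ℂ}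
    (hp : p.IsHomogeneous d) (q : MvPolynomial τ ℂ) :
    homogeneousComponent N (q * p) = homogeneousComponent (N - d) q * p := by
  induction q using MvPolynomial.induction_on' with
  | monomial sf a =>
      rw [hc_homog ((isHomogeneous_monomial a rfl).mul hp), hc_homog (isHomogeneous_monomial a rfl)]
      by_cases h : N = sf.degree + d
      · rw [if_pos h, if_pos (by omega)]
      · rw [if_neg h, if_neg (by omega), zero_mul]
  | add f g hf hg => rw [add_mul, map_add, map_add, hf, hg, add_mul]

set_option maxHeartbeats 2000000 in
theorem proj_zero {κ τ : Type} [Fintype κ] [Fintype τ] {d : ℕ} (hd : 0 < d)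
    (f : κ → MvPolynomial τ ℂ) (hf : ∀ i, (f i).IsHomogeneous d)
    (hcard : Fintype.card κ < Fintype.card τ) :
    ∃ v : τ → ℂ, v ≠ 0 ∧ ∀ i, eval v (f i) = 0 := by
  by_contra hcon
  push_neg at hcon
  have h0 : ∀ v : τ → ℂ, (∀ i, eval v (f i) = 0) → v = 0 := by
    intro v hv
    by_contra hv0
    obtain ⟨i, hi⟩ := hcon v hv0
    exact hi (hv i)
  set J : Ideal (MvPolynomial τ ℂ) := Ideal.span (Set.range f) with hJ
  -- Nullstellensatz: each variable is in the radical
  have hXrad : ∀ j : τ, (X j : MvPolynomial τ ℂ) ∈ J.radical := by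
    intro j
    rw [← vanishingIdeal_zeroLocus_eq_radical (K := ℂ), mem_vanishingIdeal_iff]
    intro v hv
    have hv0 : v = 0 := by
      refine h0 v fun i => hv _ ?_
      exact Ideal.subset_span ⟨i, rfl⟩
    rw [hv0]
    simp
  have hXpow : ∀ j : τ, ∃ nn : ℕ, (X j : MvPolynomial τ ℂ) ^ nn ∈ J := fun j =>
    Ideal.mem_radical_iff.1 (hXrad j)
  choose Nf hNf using hXpow
  obtain ⟨N, hNd, hXN⟩ : ∃ N : ℕ, d ≤ N ∧ ∀ j : τ, (X j : MvPolynomial τ ℂ) ^ N ∈ J := by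
    refine ⟨d + Finset.univ.sup Nf, Nat.le_add_right _ _, fun j => ?_⟩
    have h1 : Nf j ≤ d + Finset.univ.sup Nf :=
      le_trans (Finset.le_sup (Finset.mem_univ j)) (Nat.le_add_left _ _)
    have h2 : (X j : MvPolynomial τ ℂ) ^ (d + Finset.univ.sup Nf)
        = X j ^ (d + Finset.univ.sup Nf - Nf j) * X j ^ Nf j := by
      rw [← pow_add]; congr 1; omega
    rw [h2]
    exact Ideal.mul_mem_left _ _ (hNf j)
  have hN1 : 0 < N := by omega
  -- bounded-degree representations
  have hrep : ∀ j : τ, ∃ g : κ → MvPolynomial τ ℂ, (∑ i, g i * f i = X j ^ N) ∧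
      ∀ i, (g i).IsHomogeneous (N - d) := by
    intro j
    obtain ⟨cc, hcc⟩ := (Submodule.mem_span_range_iff_exists_fun (MvPolynomial τ ℂ)).1 (hXN j)
    refine ⟨fun i => homogeneousComponent (N - d) (cc i), ?_, fun i =>
      homogeneousComponent_isHomogeneous _ _⟩
    have h2 := congrArg (homogeneousComponent N) hcc
    rw [map_sum] at h2
    have h3 : ∀ i : κ, homogeneousComponent N (cc i • f i)
        = homogeneousComponent (N - d) (cc i) * f i := by
      intro i
      rw [smul_eq_mul, hc_mul hNd (hf i)]
    rw [Finset.sum_congr rfl (fun i _ => h3 i)] at h2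
    rwa [hc_homog (isHomogeneous_X_pow j N), if_pos rfl] at h2
  choose g hgsum hghom using hrep
  -- the subalgebra generated by the f i
  set R' : Subalgebra ℂ (MvPolynomial τ ℂ) := Algebra.adjoin ℂ (Set.range f) with hR'
  set B : ℕ := (N - 1) * Fintype.card τ + 1 with hB
  set V : Set (MvPolynomial τ ℂ) := Set.range (fun (gg : τ → Fin B) =>
    (monomial (Finsupp.equivFunOnFinite.symm (fun j => ((gg j : ℕ)))) (1 : ℂ) : MvPolynomial τ ℂ)) with hV
  have hmonoV : ∀ sf : τ →₀ ℕ, sf.degree < B → (monomial sf (1 : ℂ) : MvPolynomial τ ℂ) ∈ V := by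
    intro sf hsf
    refine ⟨fun j => ⟨sf j, lt_of_le_of_lt (Finsupp.le_degree j sf) hsf⟩, ?_⟩
    have hcoe : (fun j => ((⟨sf j, lt_of_le_of_lt (Finsupp.le_degree j sf) hsf⟩ : Fin B) : ℕ))
        = ⇑sf := rfl
    exact congrArg (fun t => (monomial t (1 : ℂ) : MvPolynomial τ ℂ))
      ((congrArg Finsupp.equivFunOnFinite.symm hcoe).trans (Finsupp.equivFunOnFinite_symm_coe sf))
  set M : Submodule R' (MvPolynomial τ ℂ) := Submodule.span R' V with hM
  have key : ∀ D : ℕ, ∀ p : MvPolynomial τ ℂ, p.totalDegree ≤ D → p ∈ M := by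
    intro D
    induction D using Nat.strong_induction_on with
    | _ D IH =>
      intro p hp
      nth_rewrite 1 [p.as_sum]
      refine Submodule.sum_mem _ (fun sf hsf => ?_)
      by_cases ha : coeff sf p = 0
      · simp [ha]
      have hsD : sf.degree ≤ D := le_trans (le_totalDegree hsf) hp
      by_cases hsB : sf.degree < B
      · have h1 : (monomial sf (1 : ℂ) : MvPolynomial τ ℂ) ∈ M := Submodule.subset_span (hmonoV sf hsB)
        have h2 : (monomial sf (coeff sf p) : MvPolynomial τ ℂ)
            = (⟨C (coeff sf p), R'.algebraMap_mem _⟩ : R') • (monomial sf (1 : ℂ) : MvPolynomial τ ℂ) := by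
          rw [Algebra.smul_def,
            show ((algebraMap R' (MvPolynomial τ ℂ)) ⟨C (coeff sf p), R'.algebraMap_mem _⟩)
              = C (coeff sf p) from rfl, C_mul_monomial, mul_one]
        rw [h2]
        exact Submodule.smul_mem _ _ h1
      · push_neg at hsB
        have hj : ∃ j, N ≤ sf j := by
          by_contra hno
          push_neg at hno
          have : sf.degree ≤ (N - 1) * Fintype.card τ := by
            rw [degree_sum_univ]
            calc ∑ j, sf j ≤ ∑ _j : τ, (N - 1) :=
              Finset.sum_le_sum (fun j _ => by have := hno j; omega)
            _ = (N - 1) * Fintype.card τ := by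
              rw [Finset.sum_const, Finset.card_univ, smul_eq_mul, mul_comm]
          omega
        obtain ⟨j, hjN⟩ := hj
        have hsplit : (monomial sf (coeff sf p) : MvPolynomial τ ℂ)
            = monomial (sf - Finsupp.single j N) (coeff sf p) * X j ^ N := by
          rw [X_pow_eq_monomial, monomial_mul, mul_one,
            tsub_add_cancel_of_le (Finsupp.single_le_iff.2 hjN)]
        rw [hsplit, ← hgsum j, Finset.mul_sum]
        refine Submodule.sum_mem _ (fun i _ => ?_)
        by_cases hgz : g j i = 0
        · simp [hgz]
        have hudeg : (sf - Finsupp.single j N).degree = sf.degree - N := by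
          have hsum : ∀ w, (sf - Finsupp.single j N) w + Finsupp.single j N w = sf w := by
            intro w
            have hle : Finsupp.single j N w ≤ sf w := by
              rcases eq_or_ne w j with rfl | hw
              · simpa [Finsupp.single_eq_same] using hjN
              · simp [Finsupp.single_eq_of_ne' (Ne.symm hw)]
            rw [Finsupp.tsub_apply]
            omega
          have hNsum : ∑ w, Finsupp.single j N w = N := by
            rw [Finset.sum_eq_single j (fun w _ hw => Finsupp.single_eq_of_ne' (Ne.symm hw))
              (fun h => absurd (Finset.mem_univ j) h)]
            exact Finsupp.single_eq_same
          have h20 : ∑ w, sf w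
              = (∑ w, (sf - Finsupp.single j N) w) + ∑ w, Finsupp.single j N w := by
            rw [← Finset.sum_add_distrib]
            exact (Finset.sum_congr rfl (fun w _ => (hsum w).symm))
          rw [degree_sum_univ, degree_sum_univ]
          omega
        set q : MvPolynomial τ ℂ := monomial (sf - Finsupp.single j N) (coeff sf p) * g j i with hq
        have hqdeg : q.totalDegree < D := by
          have h5 : (g j i).totalDegree = N - d := (hghom j i).totalDegree hgz
          have h4 : q.totalDegree ≤ (sf.degree - N) + (N - d) := by
            rw [hq]
            refine le_trans (totalDegree_mul _ _) ?_
            rw [totalDegree_monomial _ ha, h5,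
              show ((sf - Finsupp.single j N).sum fun _ e => e)
                = (sf - Finsupp.single j N).degree from rfl, hudeg]
          have hNsf : N ≤ sf.degree := le_trans hjN (Finsupp.le_degree j sf)
          omega
        have hqM : q ∈ M := IH q.totalDegree hqdeg q le_rfl
        have hfiR : f i ∈ R' := Algebra.subset_adjoin ⟨i, rfl⟩
        have h7 : monomial (sf - Finsupp.single j N) (coeff sf p) * (g j i * f i)
            = (⟨f i, hfiR⟩ : R') • q := by
          rw [Algebra.smul_def,
            show ((algebraMap R' (MvPolynomial τ ℂ)) ⟨f i, hfiR⟩) = f i from rfl, hq]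
          ring
        rw [h7]
        exact Submodule.smul_mem _ _ hqM
  have hspan : M = ⊤ := by
    rw [eq_top_iff]
    intro p _
    exact key p.totalDegree p le_rfl
  haveI hfinite : Module.Finite R' (MvPolynomial τ ℂ) :=
    ⟨by rw [← hspan]; exact Submodule.fg_def.2 ⟨V, Set.finite_range _, rfl⟩⟩
  -- Jacobian kernel over the fraction field
  set L := FractionRing (MvPolynomial τ ℂ) with hL
  set Jm : Matrix κ τ L := fun i j => algebraMap (MvPolynomial τ ℂ) L (pderiv j (f i)) with hJm
  have hker : ∃ w : τ → L, w ≠ 0 ∧ Jm.mulVec w = 0 := by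
    have hni : ¬ Function.Injective Jm.mulVecLin := by
      intro hinj
      have h8 := LinearMap.finrank_le_finrank_of_injective hinj
      rw [Module.finrank_fintype_fun_eq_card, Module.finrank_fintype_fun_eq_card] at h8
      omega
    rw [← LinearMap.ker_eq_bot] at hni
    obtain ⟨w, hw, hw0⟩ := Submodule.ne_bot_iff _ |>.1 hni
    exact ⟨w, hw0, by simpa [Matrix.mulVecLin_apply] using hw⟩
  obtain ⟨w, hw0, hwv⟩ := hker
  obtain ⟨b, hb⟩ := IsLocalization.exist_integer_multiples (nonZeroDivisors (MvPolynomial τ ℂ)) Finset.univ w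
  have hb' : ∀ j : τ, ∃ y : MvPolynomial τ ℂ, algebraMap (MvPolynomial τ ℂ) L y = (b : MvPolynomial τ ℂ) • w j := fun j => hb j (Finset.mem_univ j)
  choose lam hlam using hb'
  have hbne : algebraMap (MvPolynomial τ ℂ) L (b : MvPolynomial τ ℂ) ≠ 0 := by
    have h9 : (b : MvPolynomial τ ℂ) ≠ 0 := nonZeroDivisors.coe_ne_zero b
    exact (map_ne_zero_iff _ (IsFractionRing.injective (MvPolynomial τ ℂ) L)).2 h9
  have hlamne : ∃ j, lam j ≠ 0 := by
    obtain ⟨j, hj⟩ := Function.ne_iff.1 hw0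
    refine ⟨j, fun h => hj ?_⟩
    have h10 := hlam j
    rw [h, map_zero, ← algebraMap_smul (R := MvPolynomial τ ℂ) L ((b : MvPolynomial τ ℂ)) (w j),
      smul_eq_mul] at h10
    show w j = (0 : τ → L) j
    rcases mul_eq_zero.1 h10.symm with h11 | h11
    · exact absurd h11 hbne
    · simp [h11]
  obtain ⟨j₀, hj₀⟩ := hlamne
  -- the derivation
  set Δ : MvPolynomial τ ℂ → MvPolynomial τ ℂ := fun p => ∑ j, lam j * pderiv j p with hΔ
  have hΔadd : ∀ p q : MvPolynomial τ ℂ, Δ (p + q) = Δ p + Δ q := by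
    intro p q
    simp [hΔ, map_add, mul_add, Finset.sum_add_distrib]
  have hΔmul : ∀ p q : MvPolynomial τ ℂ, Δ (p * q) = p * Δ q + q * Δ p := by
    intro p q
    show (∑ j, lam j * pderiv j (p * q))
      = p * (∑ j, lam j * pderiv j q) + q * (∑ j, lam j * pderiv j p)
    rw [Finset.mul_sum, Finset.mul_sum, ← Finset.sum_add_distrib]
    apply Finset.sum_congr rfl
    intro j _
    rw [pderiv_mul]
    ring
  have hΔC : ∀ a : ℂ, Δ (C a) = 0 := by
    intro a; simp [hΔ]
  have hΔf : ∀ i : κ, Δ (f i) = 0 := by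
    intro i
    apply IsFractionRing.injective (MvPolynomial τ ℂ) L
    rw [map_zero, hΔ]
    simp only [map_sum, map_mul]
    have h12 : ∀ j : τ, algebraMap (MvPolynomial τ ℂ) L (lam j) * algebraMap (MvPolynomial τ ℂ) L (pderiv j (f i))
        = algebraMap (MvPolynomial τ ℂ) L (b : MvPolynomial τ ℂ) * (w j * Jm i j) := by
      intro j
      rw [hlam j, ← algebraMap_smul (R := MvPolynomial τ ℂ) L ((b : MvPolynomial τ ℂ)) (w j),
        smul_eq_mul]
      show algebraMap (MvPolynomial τ ℂ) L ↑b * w j * algebraMap (MvPolynomial τ ℂ) L (pderiv j (f i)) = _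
      ring
    rw [Finset.sum_congr rfl (fun j _ => h12 j), ← Finset.mul_sum]
    have h13 : ∑ j, w j * Jm i j = 0 := by
      have h13' : ∑ j, Jm i j * w j = 0 := by
        simpa [Matrix.mulVec, dotProduct] using congrFun hwv i
      rw [← h13']
      apply Finset.sum_congr rfl
      intros; ring
    rw [h13, mul_zero]
  have hΔR' : ∀ p ∈ R', Δ p = 0 := by
    intro p hp
    induction hp using Algebra.adjoin_induction with
    | mem x hx => obtain ⟨i, rfl⟩ := hx; exact hΔf i
    | algebraMap r => exact hΔC r
    | add x y hx hy ihx ihy => rw [hΔadd, ihx, ihy, add_zero]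
    | mul x y hx hy ihx ihy => rw [hΔmul, ihx, ihy, mul_zero, mul_zero, add_zero]
  have hΔzero : Δ 0 = 0 := by simp [hΔ]
  have hΔpow : ∀ (x : MvPolynomial τ ℂ) (nn : ℕ), Δ (x ^ (nn + 1)) = ((nn : MvPolynomial τ ℂ) + 1) * x ^ nn * Δ x := by
    intro x nn
    induction nn with
    | zero => simp [pow_one]
    | succ k ihk =>
        have : x ^ (k + 2) = x ^ (k + 1) * x := by ring
        rw [this, hΔmul, ihk]
        push_cast
        ring
  have hΔaeval : ∀ (P : Polynomial R') (x : MvPolynomial τ ℂ),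
      Δ (Polynomial.aeval x P) = Polynomial.aeval x (Polynomial.derivative P) * Δ x := by
    intro P x
    induction P using Polynomial.induction_on' with
    | add p q hp hq =>
        rw [map_add (Polynomial.aeval x) p q, hΔadd, hp, hq, Polynomial.derivative_add,
          map_add (Polynomial.aeval x) (Polynomial.derivative p) (Polynomial.derivative q),
          add_mul]
    | monomial nn a =>
        rw [Polynomial.aeval_monomial, Polynomial.derivative_monomial, Polynomial.aeval_monomial]
        cases nn with
        | zero =>
            simp only [pow_zero, mul_one, Nat.cast_zero, mul_zero, map_zero, zero_mul]
            exact hΔR' _ a.2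
        | succ k =>
            rw [hΔmul, hΔpow]
            have ha0 : Δ ((algebraMap R' (MvPolynomial τ ℂ)) a) = 0 := hΔR' _ (by exact a.2)
            rw [ha0, mul_zero, add_zero]
            have hcast : (algebraMap R' (MvPolynomial τ ℂ)) (a * (((k : ℕ) + 1 : ℕ) : R'))
                = (algebraMap R' (MvPolynomial τ ℂ) a)
                  * (((k : ℕ) + 1 : ℕ) : MvPolynomial τ ℂ) := by
              rw [map_mul, map_natCast]
            rw [show ((k : ℕ) + 1 - 1 : ℕ) = k from rfl, hcast]
            push_cast
            ring
  -- every variable is killed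
  have hXj : ∀ j : τ, Δ (X j) = 0 := by
    intro j
    have hint : IsIntegral R' (X j : MvPolynomial τ ℂ) := IsIntegral.of_finite R' _
    have hEex : ∃ e : ℕ, ∃ P : Polynomial R', P ≠ 0 ∧ Polynomial.aeval (X j : MvPolynomial τ ℂ) P = 0
        ∧ P.natDegree = e := by
      obtain ⟨P₀, hP₀m, hP₀⟩ := hint
      exact ⟨P₀.natDegree, P₀, hP₀m.ne_zero, by rwa [Polynomial.aeval_def], rfl⟩
    obtain ⟨P, hP0, hPa, hPd⟩ := Nat.find_spec hEex
    have hdeg : P.natDegree ≠ 0 := by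
      intro hdz
      obtain ⟨a0, ha0⟩ := Polynomial.natDegree_eq_zero.1 hdz
      rw [← ha0, Polynomial.aeval_C] at hPa
      have ha00 : a0 = 0 := Subtype.ext (by exact hPa)
      rw [← ha0, ha00, map_zero] at hP0
      exact hP0 rfl
    haveI : NoZeroSMulDivisors ℕ R' := ⟨fun {c x} h => by
      have hcx : ((c : ℕ) : MvPolynomial τ ℂ) * (x : MvPolynomial τ ℂ) = 0 := by
        have h' := congrArg (Subtype.val) h
        simpa [nsmul_eq_mul] using h'
      rcases mul_eq_zero.1 hcx with h1 | h1
      · exact Or.inl (by exact_mod_cast h1)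
      · exact Or.inr (Subtype.ext h1)⟩
    have hQ : Polynomial.derivative P ≠ 0 := by
      intro h
      exact hdeg (Polynomial.natDegree_eq_zero_of_derivative_eq_zero h)
    have hQa : Polynomial.aeval (X j : MvPolynomial τ ℂ) (Polynomial.derivative P) ≠ 0 := by
      intro h
      have hlt : (Polynomial.derivative P).natDegree < Nat.find hEex := by
        rw [← hPd]; exact Polynomial.natDegree_derivative_lt hdeg
      exact Nat.find_min hEex hlt ⟨Polynomial.derivative P, hQ, h, rfl⟩
    have h14 := hΔaeval P (X j)
    rw [hPa, hΔzero] at h14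
    rcases mul_eq_zero.1 h14.symm with h15 | h15
    · exact absurd h15 hQa
    · exact h15
  -- contradiction
  apply hj₀
  have h16 := hXj j₀
  simp only [hΔ] at h16
  have h17 : ∀ j : τ, j ∈ Finset.univ → j ≠ j₀ → lam j * pderiv j (X j₀ : MvPolynomial τ ℂ) = 0 := by
    intro j _ hj
    rw [pderiv_X, Pi.single_eq_of_ne (Ne.symm hj)]
    simp
  rw [Finset.sum_eq_single j₀ h17 (by intro h; exact absurd (Finset.mem_univ j₀) h)] at h16
  rwa [pderiv_X_self, mul_one] at h16

end ProjZero

private lemma tApp_inst_irrel {ι : Type} {m : ℕ} (i1 i2 : Fintype ι) (B : Tensor ι m)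
    (x : ι → ℂ) (w : ι) : @tApp ι i1 m B x w = @tApp ι i2 m B x w := by
  obtain rfl : i1 = i2 := Subsingleton.elim i1 i2
  rfl

lemma tApp_restrict {n m : ℕ} (A : Tensor (Fin n) m) (S : Set (Fin n)) (x : Fin n → ℂ)
    (i : Fin n) (hi : i ∈ S)
    (hvan : ∀ f : Fin (m - 1) → Fin n, (∃ j, f j ∉ S) → A i f * ∏ j, x (f j) = 0) :
    tApp A x i = tApp (restrict A S) (fun w => x w.1) ⟨i, hi⟩ := by
  unfold tApp
  have h1 : ∀ g : Fin (m - 1) → S,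
      restrict A S ⟨i, hi⟩ g * ∏ j, (fun w : S => x w.1) (g j)
        = A i (fun j => ((g j : Fin n))) * ∏ j, x ((fun j' => ((g j' : Fin n))) j) :=
    fun g => rfl
  rw [Finset.sum_congr rfl (fun g _ => h1 g)]
  have himg : ∑ f ∈ Finset.univ.image
        (fun (g : Fin (m - 1) → S) (j : Fin (m - 1)) => ((g j : Fin n))),
        (A i f * ∏ j, x (f j))
      = ∑ g : Fin (m - 1) → S, A i (fun j => ((g j : Fin n))) * ∏ j, x ((g j : Fin n)) :=
    Finset.sum_image (fun g1 _ g2 _ h => by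
      funext j; exact Subtype.ext (congrFun h j))
  rw [← himg]
  refine (Finset.sum_subset (Finset.subset_univ _) ?_).symm
  intro f _ hf
  apply hvan f
  by_contra hno
  push_neg at hno
  exact hf (Finset.mem_image.2 ⟨fun j => ⟨f j, hno j⟩, Finset.mem_univ _, rfl⟩)

lemma bddAbove_abs_eigs (hm : 2 ≤ m) (B : Tensor ι m) :
    BddAbove ((fun z : ℂ => ‖z‖) '' Eigenvalues B) := by
  refine ⟨∑ i, ∑ f : Fin (m - 1) → ι, ‖B i f‖, ?_⟩
  rintro r ⟨l, ⟨x, hx0, hxe⟩, rfl⟩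
  obtain ⟨i₁, hi₁⟩ := Function.ne_iff.1 hx0
  obtain ⟨i₀, _, hmax⟩ := Finset.exists_max_image Finset.univ
    (fun i => ‖x i‖) ⟨i₁, Finset.mem_univ _⟩
  have hM : 0 < ‖x i₀‖ := by
    have h1 : 0 < ‖x i₁‖ := by
      simpa [Pi.zero_apply] using norm_pos_iff.2 hi₁
    exact lt_of_lt_of_le h1 (hmax i₁ (Finset.mem_univ _))
  have h2 : ‖l‖ * ‖x i₀‖ ^ (m - 1)
      ≤ (∑ f : Fin (m - 1) → ι, ‖B i₀ f‖) * ‖x i₀‖ ^ (m - 1) := by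
    calc ‖l‖ * ‖x i₀‖ ^ (m - 1)
        = ‖l * x i₀ ^ (m - 1)‖ := by rw [norm_mul, norm_pow]
      _ = ‖tApp B x i₀‖ := by rw [hxe i₀]
      _ ≤ ∑ f : Fin (m - 1) → ι, ‖B i₀ f * ∏ j, x (f j)‖ :=
          norm_sum_le _ _
      _ ≤ ∑ f : Fin (m - 1) → ι, ‖B i₀ f‖ * ‖x i₀‖ ^ (m - 1) := by
          refine Finset.sum_le_sum (fun f _ => ?_)
          rw [norm_mul]
          refine mul_le_mul_of_nonneg_left ?_ (norm_nonneg _)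
          calc ‖∏ j, x (f j)‖ = ∏ j, ‖x (f j)‖ := norm_prod _ _
            _ ≤ ∏ _j : Fin (m - 1), ‖x i₀‖ :=
                Finset.prod_le_prod (fun _ _ => norm_nonneg _)
                  (fun j _ => hmax (f j) (Finset.mem_univ _))
            _ = ‖x i₀‖ ^ (m - 1) := by
                rw [Finset.prod_const, Finset.card_univ, Fintype.card_fin]
      _ = (∑ f : Fin (m - 1) → ι, ‖B i₀ f‖) * ‖x i₀‖ ^ (m - 1) :=
          (Finset.sum_mul _ _ _).symm
  have h3 := le_of_mul_le_mul_right h2 (pow_pos hM _)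
  exact le_trans h3 (Finset.single_le_sum
    (f := fun i => ∑ f : Fin (m - 1) → ι, ‖B i f‖)
    (fun i _ => Finset.sum_nonneg fun f _ => norm_nonneg _) (Finset.mem_univ i₀))

lemma specRad_nonneg (B : Tensor ι m) : 0 ≤ specRad B :=
  Real.sSup_nonneg (fun x hx => by
    rcases hx with ⟨l, _, rfl⟩; exact norm_nonneg l)

lemma abs_le_specRad (hm : 2 ≤ m) {B : Tensor ι m} {l : ℂ} (hl : l ∈ Eigenvalues B) :
    ‖l‖ ≤ specRad B :=
  le_csSup (bddAbove_abs_eigs hm B) ⟨l, hl, rfl⟩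


open MvPolynomial in
lemma eigen_restrict_subset {n m s : ℕ} (hm : 2 ≤ m) (A : Tensor (Fin n) m)
    (c : Fin n → Fin s) (hblock : ∀ i f, A i f ≠ 0 → ∀ j, c i ≤ c (f j)) (k : Fin s) :
    Eigenvalues (restrict A {i | c i = k}) ⊆ Eigenvalues A := by
  rintro l ⟨y, hy0, hyeq⟩
  have hd : 0 < m - 1 := by omega
  set x₀ : Fin n → ℂ := fun i => if h : c i = k then y ⟨i, h⟩ else 0 with hx₀
  have hx₀S : ∀ i, ¬ (c i = k) → x₀ i = 0 := fun i h => dif_neg h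
  have hx₀y : (fun w : ({i : Fin n | c i = k} : Set (Fin n)) => x₀ w.1) = y := by
    funext w
    exact dif_pos w.2
  have htA : ∀ i (hi : c i = k), tApp A x₀ i = l * x₀ i ^ (m - 1) := by
    intro i hi
    rw [tApp_restrict A {i : Fin n | c i = k} x₀ i hi ?_, hx₀y]
    · have h2 := hyeq ⟨i, hi⟩
      have hx : x₀ i = y ⟨i, hi⟩ := dif_pos hi
      rw [hx]
      exact (tApp_inst_irrel _ _ _ _ _).trans h2
    · intro f ⟨j, hj⟩
      rw [Finset.prod_eq_zero (Finset.mem_univ j) (hx₀S (f j) hj), mul_zero]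
  -- variables for the lower classes
  set β := {i : Fin n // c i < k} with hβ
  set lin : Fin n → MvPolynomial (Option β) ℂ := fun w =>
    if h : c w < k then X (some ⟨w, h⟩) else C (x₀ w) * X none with hlin
  set G : β → MvPolynomial (Option β) ℂ := fun i =>
    C l * X (some i) ^ (m - 1)
      - ∑ f : Fin (m - 1) → Fin n, C (A i.1 f) * ∏ j, lin (f j) with hG
  have hlin1 : ∀ w, (lin w).IsHomogeneous 1 := by
    intro w
    by_cases h : c w < k
    · have : lin w = X (some ⟨w, h⟩) := dif_pos h
      rw [this]; exact isHomogeneous_X _ _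
    · have : lin w = C (x₀ w) * X none := dif_neg h
      rw [this]; exact (isHomogeneous_X _ _).C_mul _
  have hGhom : ∀ i : β, (G i).IsHomogeneous (m - 1) := by
    intro i
    refine MvPolynomial.IsHomogeneous.sub ?_ ?_
    · exact (isHomogeneous_X_pow (some i) (m - 1)).C_mul l
    · refine MvPolynomial.IsHomogeneous.sum _ _ _ (fun f _ => ?_)
      have hprod := MvPolynomial.IsHomogeneous.prod Finset.univ (fun j => lin (f j))
        (fun _ => 1) (fun j _ => hlin1 (f j))
      have hsum1 : (∑ _j : Fin (m - 1), 1) = m - 1 := by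
        rw [Finset.sum_const, Finset.card_univ, Fintype.card_fin, smul_eq_mul, mul_one]
      rw [hsum1] at hprod
      exact hprod.C_mul _
  obtain ⟨v, hv0, hveval⟩ := proj_zero hd G hGhom
    (by rw [Fintype.card_option]; omega)
  set z : Fin n → ℂ := fun w => if h : c w < k then v (some ⟨w, h⟩) else x₀ w * v none with hz
  have hlinz : ∀ w, eval v (lin w) = z w := by
    intro w
    by_cases h : c w < k
    · simp only [hlin, hz]; rw [dif_pos h, dif_pos h, eval_X]
    · simp only [hlin, hz]; rw [dif_neg h, dif_neg h, map_mul, eval_C, eval_X]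
  have hzlow : ∀ w : β, z w.1 = v (some w) := by
    intro w
    rw [hz]
    exact dif_pos w.2
  have hzhigh : ∀ w, ¬ (c w < k) → z w = x₀ w * v none := fun w h => dif_neg h
  have hGeval : ∀ i : β, eval v (G i) = l * z i.1 ^ (m - 1) - tApp A z i.1 := by
    intro i
    rw [hG]
    simp only [map_sub, map_mul, map_pow, map_sum, map_prod, eval_C, eval_X]
    rw [tApp]
    congr 1
    · rw [hzlow i]
    · refine Finset.sum_congr rfl (fun f _ => ?_)
      congr 1
      exact Finset.prod_congr rfl (fun j _ => hlinz (f j))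
  have hzeig : ∀ i, tApp A z i = l * z i ^ (m - 1) := by
    intro i
    rcases lt_trichotomy (c i) k with hlt | heq | hgt
    · have h3 := hveval ⟨i, hlt⟩
      rw [hGeval ⟨i, hlt⟩] at h3
      have := sub_eq_zero.1 h3
      exact this.symm
    · have hterm : ∀ f : Fin (m - 1) → Fin n,
          A i f * ∏ j, z (f j) = A i f * ∏ j, (x₀ (f j) * v none) := by
        intro f
        by_cases hAf : A i f = 0
        · rw [hAf, zero_mul, zero_mul]
        · congr 1
          refine Finset.prod_congr rfl (fun j _ => ?_)
          have h4 : ¬ (c (f j) < k) := not_lt.2 (heq ▸ hblock i f hAf j)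
          exact hzhigh (f j) h4
      have h5 : tApp A z i = tApp A x₀ i * v none ^ (m - 1) := by
        rw [tApp, tApp, Finset.sum_congr rfl (fun f _ => hterm f), Finset.sum_mul]
        refine Finset.sum_congr rfl (fun f _ => ?_)
        rw [Finset.prod_mul_distrib, Finset.prod_const, Finset.card_univ, Fintype.card_fin]
        ring
      rw [h5, htA i heq, hzhigh i (not_lt.2 heq.ge), mul_pow]
      ring
    · have h6 : ¬ (c i < k) := not_lt.2 hgt.le
      have h7 : x₀ i = 0 := hx₀S i (ne_of_gt hgt)
      have hz0 : z i = 0 := by rw [hzhigh i h6, h7, zero_mul]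
      have htz : tApp A z i = 0 := by
        rw [tApp]
        refine Finset.sum_eq_zero (fun f _ => ?_)
        by_cases hAf : A i f = 0
        · rw [hAf, zero_mul]
        · have h8 : k < c (f ⟨0, hd⟩) := lt_of_lt_of_le hgt (hblock i f hAf ⟨0, hd⟩)
          have h9 : z (f ⟨0, hd⟩) = 0 := by
            rw [hzhigh _ (not_lt.2 h8.le), hx₀S _ (ne_of_gt h8), zero_mul]
          rw [Finset.prod_eq_zero (Finset.mem_univ ⟨0, hd⟩) h9, mul_zero]
      rw [htz, hz0, zero_pow (by omega : m - 1 ≠ 0), mul_zero]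
  have hzne : z ≠ 0 := by
    intro hzz
    apply hv0
    funext o
    cases o with
    | some w =>
        have h11 := congrFun hzz w.1
        rw [hzlow w] at h11
        simpa using h11
    | none =>
        obtain ⟨w, hw⟩ := Function.ne_iff.1 hy0
        have hzw := congrFun hzz w.1
        have hck : c w.1 = k := w.2
        have h10 : ¬ (c w.1 < k) := by rw [hck]; exact lt_irrefl k
        rw [hzhigh w.1 h10] at hzw
        have hx0w : x₀ w.1 = y w := dif_pos w.2
        rw [hx0w, Pi.zero_apply] at hzw
        have hyw : y w ≠ 0 := by simpa using hw
        have : v none = 0 := by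
          rcases mul_eq_zero.1 hzw with h12 | h12
          · exact absurd h12 hyw
          · exact h12
        simpa using this
  exact ⟨z, hzne, hzeig⟩



/-- For a nonnegative tensor with block upper-triangular structure with respect to classes
`α₁,…,α_s`: each principal subtensor satisfies `ρ(A[αᵢ]) ≤ ρ(A)`, and any eigenvector `x`
for `ρ(A)` has some class `αᵢ` with `ρ(A[αᵢ]) = ρ(A)` and `x[αᵢ] ≠ 0`. -/
theorem stmt16 {n m s : ℕ} (hm : 2 ≤ m) (A : Tensor (Fin n) m) (hA : Nonneg A)
    (c : Fin n → Fin s)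
    (hblock : ∀ i f, A i f ≠ 0 → ∀ j, c i ≤ c (f j)) :
    (∀ k : Fin s, specRad (restrict A {i | c i = k}) ≤ specRad A) ∧
    (∀ x : Fin n → ℂ, IsEigPair A ((specRad A : ℝ) : ℂ) x →
      ∃ k : Fin s, specRad (restrict A {i | c i = k}) = specRad A ∧
        ∃ i : Fin n, c i = k ∧ x i ≠ 0) := by
  have part1 : ∀ k : Fin s, specRad (restrict A {i | c i = k}) ≤ specRad A := by
    intro k
    refine Real.sSup_le ?_ (specRad_nonneg A)
    rintro r ⟨l, hl, rfl⟩
    exact abs_le_specRad hm (eigen_restrict_subset hm A c hblock k hl)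
  refine ⟨part1, ?_⟩
  rintro x ⟨hx0, hxe⟩
  obtain ⟨i₁, hi₁⟩ := Function.ne_iff.1 hx0
  have hTne : (Finset.univ.filter (fun i => x i ≠ 0)).Nonempty :=
    ⟨i₁, Finset.mem_filter.2 ⟨Finset.mem_univ _, by simpa using hi₁⟩⟩
  obtain ⟨i₀, hi₀T, hmax⟩ := Finset.exists_max_image
    (Finset.univ.filter (fun i => x i ≠ 0)) c hTne
  have hxi₀ : x i₀ ≠ 0 := (Finset.mem_filter.1 hi₀T).2
  refine ⟨c i₀, ?_, i₀, rfl, hxi₀⟩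
  set ρ : ℂ := ((specRad A : ℝ) : ℂ) with hρ
  set y : ({i : Fin n | c i = c i₀} : Set (Fin n)) → ℂ := fun w => x w.1 with hy
  have hy0 : y ≠ 0 := by
    intro h
    exact hxi₀ (by simpa [hy] using congrFun h ⟨i₀, rfl⟩)
  have hye : ∀ w, tApp (restrict A {i : Fin n | c i = c i₀}) y w = ρ * y w ^ (m - 1) := by
    rintro ⟨i, hi⟩
    have hvan : ∀ f : Fin (m - 1) → Fin n, (∃ j, f j ∉ {i : Fin n | c i = c i₀}) →
        A i f * ∏ j, x (f j) = 0 := by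
      rintro f ⟨j, hj⟩
      by_cases hAf : A i f = 0
      · rw [hAf, zero_mul]
      · have h1 : c i ≤ c (f j) := hblock i f hAf j
        have hik : c i = c i₀ := hi
        have h2 : c (f j) ≠ c i₀ := hj
        have h3 : x (f j) = 0 := by
          by_contra h4
          have h5 : c (f j) ≤ c i₀ := hmax (f j)
            (Finset.mem_filter.2 ⟨Finset.mem_univ _, h4⟩)
          exact h2 (le_antisymm h5 (hik ▸ h1))
        rw [Finset.prod_eq_zero (Finset.mem_univ j) h3, mul_zero]
    have h6 := tApp_restrict A {i : Fin n | c i = c i₀} x i hi hvan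
    have h7 : tApp (restrict A {i : Fin n | c i = c i₀}) y ⟨i, hi⟩
        = tApp A x i := by
      rw [h6]
      exact tApp_inst_irrel _ _ _ _ _
    rw [h7, hxe i]
  have hρeig : ρ ∈ Eigenvalues (restrict A {i : Fin n | c i = c i₀}) := ⟨y, hy0, hye⟩
  have h8 : specRad A ≤ specRad (restrict A {i : Fin n | c i = c i₀}) := by
    have h9 := abs_le_specRad hm hρeig
    rwa [hρ, Complex.norm_real, Real.norm_eq_abs, abs_of_nonneg (specRad_nonneg A)] at h9
  exact le_antisymm (part1 (c i₀)) h8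


end PaperTensor
end

section
/- Let G be a connected m-uniform hypergraph with at least one edge and adjacency tensor A(G) with spectral radius ρ. Then for every eigenvalue λ of A(G) with |λ| = ρ, the projective eigenvariety PV_λ(A(G)) is finite, and all such projective eigenvarieties have the same cardinality. -/
open scoped BigOperators

namespace PaperTensor

variable {ι : Type} [Fintype ι] {m : ℕ}

attribute [local instance] Classical.propDecidable

/-- The adjacency tensor of an `m`-uniform hypergraph with edge set `E` on `Fin n`. -/
noncomputable def adjT (n m : ℕ) (E : Finset (Finset (Fin n))) : Tensor (Fin n) m :=
  fun i f => if insert i (Finset.image f Finset.univ) ∈ E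
    then (1 : ℂ) / (Nat.factorial (m - 1)) else 0

/-- Connectivity of vertices in a hypergraph. -/
def HConn {n : ℕ} (E : Finset (Finset (Fin n))) : Fin n → Fin n → Prop :=
  Relation.ReflTransGen (fun u w => ∃ e ∈ E, u ∈ e ∧ w ∈ e)

lemma count_image_eq {α : Type} [Fintype α] [DecidableEq α] {k : ℕ} (s : Finset α)
    (hs : s.card = k) :
    (Finset.univ.filter (fun f : Fin k → α => Finset.image f Finset.univ = s)).card
      = Nat.factorial k := by
  have hcard : Fintype.card {x // x ∈ s} = Fintype.card (Fin k) := by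
    simp [Fintype.card_coe, hs]
  have e : {f : Fin k → α // Finset.image f Finset.univ = s} ≃ (Fin k ≃ {x // x ∈ s}) := by
    refine
      { toFun := fun fh =>
          Equiv.ofBijective (fun j => (⟨fh.1 j, by
            have h := Finset.mem_image_of_mem fh.1 (Finset.mem_univ j)
            rwa [fh.2] at h⟩ : {x // x ∈ s}))
            ?_,
        invFun := fun φ => ⟨fun j => (φ j : α), ?_⟩,
        left_inv := ?_, right_inv := ?_ }
    · rw [Fintype.bijective_iff_surjective_and_card]
      refine ⟨fun v => ?_, hcard.symm⟩
      have hv : (v : α) ∈ Finset.image fh.1 Finset.univ := by rw [fh.2]; exact v.2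
      obtain ⟨j, _, hj⟩ := Finset.mem_image.mp hv
      exact ⟨j, Subtype.ext hj⟩
    · ext v
      simp only [Finset.mem_image, Finset.mem_univ, true_and]
      constructor
      · rintro ⟨j, rfl⟩; exact (φ j).2
      · intro hv
        obtain ⟨j, hj⟩ := φ.surjective ⟨v, hv⟩
        exact ⟨j, by rw [hj]⟩
    · intro fh; apply Subtype.ext; rfl
    · intro φ; ext j; rfl
  have := Fintype.card_congr e
  rw [Fintype.card_equiv (Fintype.equivOfCardEq hcard).symm] at this
  rw [← Fintype.card_subtype]
  simp [this, Fintype.card_fin]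

lemma tApp_adjT {n m : ℕ} (hm : 2 ≤ m) (E : Finset (Finset (Fin n)))
    (hunif : ∀ e ∈ E, e.card = m) (x : Fin n → ℂ) (i : Fin n) :
    tApp (adjT n m E) x i
      = ∑ e ∈ E.filter (fun e => i ∈ e), ∏ v ∈ e.erase i, x v := by
  classical
  unfold tApp adjT
  have h1 : (∑ f : Fin (m-1) → Fin n,
      (if insert i (Finset.image f Finset.univ) ∈ E then (1:ℂ) / (Nat.factorial (m-1)) else 0)
        * ∏ j, x (f j))
      = ∑ f ∈ Finset.univ.filter
          (fun f : Fin (m-1) → Fin n => insert i (Finset.image f Finset.univ) ∈ E),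
          (1:ℂ) / (Nat.factorial (m-1)) * ∏ j, x (f j) := by
    rw [Finset.sum_filter]
    apply Finset.sum_congr rfl
    intro f _
    by_cases h : insert i (Finset.image f Finset.univ) ∈ E <;> simp [h]
  rw [h1]
  rw [← Finset.sum_fiberwise_of_maps_to
    (g := fun f : Fin (m-1) → Fin n => insert i (Finset.image f Finset.univ))
    (t := E.filter (fun e => i ∈ e))
    (fun f hf => by
      simp only [Finset.mem_filter] at hf ⊢
      exact ⟨hf.2, Finset.mem_insert_self i _⟩)]
  apply Finset.sum_congr rfl
  intro e he
  simp only [Finset.mem_filter] at he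
  obtain ⟨heE, hie⟩ := he
  have hcard_e : e.card = m := hunif e heE
  have hfilter : (Finset.univ.filter
      (fun f : Fin (m-1) → Fin n => insert i (Finset.image f Finset.univ) ∈ E)).filter
      (fun f => insert i (Finset.image f Finset.univ) = e)
      = Finset.univ.filter (fun f : Fin (m-1) → Fin n => Finset.image f Finset.univ = e.erase i) := by
    ext f
    simp only [Finset.mem_filter, Finset.mem_univ, true_and]
    constructor
    · rintro ⟨-, h⟩
      have h1 : e.erase i ⊆ Finset.image f Finset.univ := by
        intro v hv
        have hvi : v ≠ i := (Finset.mem_erase.mp hv).1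
        have hve : v ∈ e := (Finset.mem_erase.mp hv).2
        rw [← h] at hve
        rcases Finset.mem_insert.mp hve with h' | h'
        · exact absurd h' hvi
        · exact h'
      have h2 : (Finset.image f Finset.univ).card ≤ m - 1 := by
        calc (Finset.image f Finset.univ).card ≤ (Finset.univ : Finset (Fin (m-1))).card :=
              Finset.card_image_le
        _ = m - 1 := by simp
      have h3 : (e.erase i).card = m - 1 := by
        rw [Finset.card_erase_of_mem hie, hcard_e]
      exact (Finset.eq_of_subset_of_card_le h1 (by rw [h3]; exact h2)).symm
    · intro h
      constructor
      · rw [h, Finset.insert_erase hie]; exact heE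
      · rw [h, Finset.insert_erase hie]
  rw [hfilter]
  have hterm : ∀ f ∈ Finset.univ.filter
      (fun f : Fin (m-1) → Fin n => Finset.image f Finset.univ = e.erase i),
      (1:ℂ) / (Nat.factorial (m-1)) * ∏ j, x (f j)
        = (1:ℂ) / (Nat.factorial (m-1)) * ∏ v ∈ e.erase i, x v := by
    intro f hf
    simp only [Finset.mem_filter, Finset.mem_univ, true_and] at hf
    have hinj : ∀ a ∈ (Finset.univ : Finset (Fin (m-1))), ∀ b ∈ Finset.univ,
        f a = f b → a = b := by
      have hci : (Finset.univ.image f).card = (Finset.univ : Finset (Fin (m-1))).card := by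
        rw [hf, Finset.card_erase_of_mem hie, hcard_e]; simp
      have := Finset.injOn_of_card_image_eq hci
      intro a _ b _ hab
      exact this (by simp) (by simp) hab
    rw [← hf, Finset.prod_image hinj]
  rw [Finset.sum_congr rfl hterm, Finset.sum_const]
  have h3 : (e.erase i).card = m - 1 := by
    rw [Finset.card_erase_of_mem hie, hcard_e]
  rw [count_image_eq _ h3, nsmul_eq_mul]
  have : ((Nat.factorial (m-1) : ℂ)) ≠ 0 := by
    exact_mod_cast Nat.cast_ne_zero.mpr (Nat.factorial_ne_zero _)
  field_simp


noncomputable def Wp {n : ℕ} (E : Finset (Finset (Fin n))) (y : Fin n → ℝ) : ℝ :=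
  ∑ e ∈ E, ∏ v ∈ e, y v

noncomputable def Np {n : ℕ} (m : ℕ) (y : Fin n → ℝ) : ℝ := ∑ i, y i ^ m

noncomputable def Pp {n : ℕ} (E : Finset (Finset (Fin n))) (y : Fin n → ℝ) (i : Fin n) : ℝ :=
  ∑ e ∈ E.filter (fun e => i ∈ e), ∏ v ∈ e.erase i, y v

lemma prod_factor_eq {α : Type} [DecidableEq α] (s : Finset α) (f g : α → ℝ)
    (hf : ∀ v ∈ s, 0 ≤ f v) (hfg : ∀ v ∈ s, f v ≤ g v) (hg : ∀ v ∈ s, 0 < g v)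
    (heq : ∏ v ∈ s, f v = ∏ v ∈ s, g v) : ∀ v ∈ s, f v = g v := by
  by_contra hcon
  push_neg at hcon
  obtain ⟨v₀, hv₀s, hv₀⟩ := hcon
  have hlt : f v₀ < g v₀ := lt_of_le_of_ne (hfg v₀ hv₀s) hv₀
  have h1 : ∏ v ∈ s.erase v₀, f v ≤ ∏ v ∈ s.erase v₀, g v :=
    Finset.prod_le_prod (fun v hv => hf v (Finset.mem_of_mem_erase hv))
      (fun v hv => hfg v (Finset.mem_of_mem_erase hv))
  have h2 : (0:ℝ) < ∏ v ∈ s.erase v₀, g v :=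
    Finset.prod_pos (fun v hv => hg v (Finset.mem_of_mem_erase hv))
  have : ∏ v ∈ s, f v < ∏ v ∈ s, g v := by
    rw [← Finset.mul_prod_erase s f hv₀s, ← Finset.mul_prod_erase s g hv₀s]
    calc f v₀ * ∏ v ∈ s.erase v₀, f v ≤ f v₀ * ∏ v ∈ s.erase v₀, g v := by
          exact mul_le_mul_of_nonneg_left h1 (hf v₀ hv₀s)
    _ < g v₀ * ∏ v ∈ s.erase v₀, g v := by
          exact mul_lt_mul_of_pos_right hlt h2
  exact absurd heq (ne_of_lt this)

lemma wp_update {n m : ℕ} (E : Finset (Finset (Fin n))) (hunif : ∀ e ∈ E, e.card = m)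
    (y : Fin n → ℝ) (i : Fin n) (s : ℝ) :
    Wp E (Function.update y i s)
      = (∑ e ∈ E.filter (fun e => i ∉ e), ∏ v ∈ e, y v) + s * Pp E y i := by
  unfold Wp Pp
  rw [← Finset.sum_filter_add_sum_filter_not E (fun e => i ∈ e)]
  rw [add_comm]
  congr 1
  · apply Finset.sum_congr rfl
    intro e he
    simp only [Finset.mem_filter] at he
    apply Finset.prod_congr rfl
    intro v hv
    exact Function.update_of_ne (fun h => he.2 (by rw [← h]; exact hv)) _ _
  · rw [Finset.mul_sum]
    apply Finset.sum_congr rfl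
    intro e he
    simp only [Finset.mem_filter] at he
    rw [← Finset.mul_prod_erase e _ he.2]
    congr 1
    · simp [Function.update_self]
    · apply Finset.prod_congr rfl
      intro v hv
      exact Function.update_of_ne (Finset.mem_erase.mp hv).1 _ _

lemma np_update {n m : ℕ} (y : Fin n → ℝ) (i : Fin n) (s : ℝ) :
    Np m (Function.update y i s) = Np m y - y i ^ m + s ^ m := by
  unfold Np
  rw [← Finset.add_sum_erase _ _ (Finset.mem_univ i),
      ← Finset.add_sum_erase _ (fun j => y j ^ m) (Finset.mem_univ i)]
  have : ∑ j ∈ Finset.univ.erase i, Function.update y i s j ^ m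
      = ∑ j ∈ Finset.univ.erase i, y j ^ m := by
    apply Finset.sum_congr rfl
    intro j hj
    rw [Function.update_of_ne (Finset.mem_erase.mp hj).1]
  rw [this, Function.update_self]
  ring

lemma wp_homog {n m : ℕ} (E : Finset (Finset (Fin n))) (hunif : ∀ e ∈ E, e.card = m)
    (t : ℝ) (y : Fin n → ℝ) : Wp E (fun v => t * y v) = t ^ m * Wp E y := by
  unfold Wp
  rw [Finset.mul_sum]
  apply Finset.sum_congr rfl
  intro e he
  rw [Finset.prod_mul_distrib, Finset.prod_const, hunif e he]

lemma np_homog {n m : ℕ} (t : ℝ) (y : Fin n → ℝ) :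
    Np m (fun v => t * y v) = t ^ m * Np m y := by
  unfold Np
  rw [Finset.mul_sum]
  apply Finset.sum_congr rfl
  intro i _
  rw [mul_pow]

lemma perron {n m : ℕ} (hm : 2 ≤ m) (E : Finset (Finset (Fin n)))
    (hunif : ∀ e ∈ E, e.card = m) (hE : E.Nonempty)
    (hconn : ∀ u w : Fin n, HConn E u w) :
    ∃ (y : Fin n → ℝ) (r : ℝ), 0 < r ∧ (∀ i, 0 < y i) ∧
      (∀ i, Pp E y i = r * y i ^ (m - 1)) ∧ Np m y = 1 ∧ r = m * Wp E y := by
  have hm0 : m ≠ 0 := by omega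
  obtain ⟨e₀, he₀⟩ := hE
  have he₀card : e₀.card = m := hunif e₀ he₀
  have he₀ne : e₀.Nonempty := Finset.card_pos.mp (by omega)
  -- the compact set
  set K : Set (Fin n → ℝ) := {y | (∀ i, 0 ≤ y i) ∧ Np m y ≤ 1} with hKdef
  have hNcont : Continuous (Np m (n := n)) := by
    unfold Np; exact continuous_finset_sum _ (fun i _ => (continuous_apply i).pow m)
  have hWcont : Continuous (Wp E) := by
    unfold Wp
    exact continuous_finset_sum _
      (fun e _ => continuous_finset_prod _ (fun v _ => continuous_apply v))
  have hKsub : K ⊆ Set.Icc (0 : Fin n → ℝ) 1 := by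
    rintro y ⟨hy0, hyN⟩
    constructor
    · intro i; exact hy0 i
    · intro i
      by_contra hgt
      push_neg at hgt
      have h1 : (1:ℝ) < y i ^ m := one_lt_pow₀ hgt hm0
      have h2 : y i ^ m ≤ Np m y := by
        unfold Np
        exact Finset.single_le_sum (fun j _ => pow_nonneg (hy0 j) m) (Finset.mem_univ i)
      linarith
  have hKclosed : IsClosed K := by
    have h1 : IsClosed {y : Fin n → ℝ | ∀ i, 0 ≤ y i} := by
      have : {y : Fin n → ℝ | ∀ i, 0 ≤ y i} = ⋂ i, {y | 0 ≤ y i} := by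
        ext y; simp
      rw [this]
      exact isClosed_iInter (fun i => isClosed_le continuous_const (continuous_apply i))
    exact h1.inter (isClosed_le hNcont continuous_const)
  have hKcomp : IsCompact K := IsCompact.of_isClosed_subset isCompact_Icc hKclosed hKsub
  have hKne : K.Nonempty := by
    refine ⟨0, fun i => le_refl 0, ?_⟩
    unfold Np
    simp [zero_pow hm0]
  obtain ⟨y, hyK, hymax⟩ := hKcomp.exists_isMaxOn hKne hWcont.continuousOn
  obtain ⟨hy0, hyN⟩ := hyK
  have hymax' : ∀ z ∈ K, Wp E z ≤ Wp E y := fun z hz => hymax hz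
  -- W y > 0
  have hWy_pos : 0 < Wp E y := by
    set z : Fin n → ℝ := fun v => if v ∈ e₀ then (1/2 : ℝ) else 0 with hz
    have hz0 : ∀ i, 0 ≤ z i := by intro i; simp only [hz]; split <;> norm_num
    have hzN : Np m z ≤ 1 := by
      unfold Np
      have : ∀ i, z i ^ m = if i ∈ e₀ then (1/2:ℝ)^m else 0 := by
        intro i; simp only [hz]; split <;> simp [zero_pow hm0]
      rw [Finset.sum_congr rfl (fun i _ => this i)]
      rw [Finset.sum_ite_mem, Finset.univ_inter, Finset.sum_const, he₀card, nsmul_eq_mul]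
      have h2 : (m : ℝ) < 2 ^ m := by exact_mod_cast (Nat.lt_two_pow_self (n := m))
      have : (1/2:ℝ)^m = 1 / 2^m := by rw [div_pow, one_pow]
      rw [this]
      rw [mul_one_div, div_le_one (by positivity)]
      linarith
    have hWz : (1/2:ℝ)^m ≤ Wp E z := by
      unfold Wp
      have hterm : ∏ v ∈ e₀, z v = (1/2:ℝ)^m := by
        rw [← he₀card, ← Finset.prod_const]
        apply Finset.prod_congr rfl
        intro v hv; simp [hz, hv]
      calc (1/2:ℝ)^m = ∏ v ∈ e₀, z v := hterm.symm
      _ ≤ ∑ e ∈ E, ∏ v ∈ e, z v := by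
          apply Finset.single_le_sum (f := fun e => ∏ v ∈ e, z v) _ he₀
          intro e _
          exact Finset.prod_nonneg (fun v _ => hz0 v)
    have := hymax' z ⟨hz0, hzN⟩
    have hpos : (0:ℝ) < (1/2:ℝ)^m := by positivity
    linarith
  -- W of zero is zero
  have hW0 : Wp E 0 = 0 := by
    unfold Wp
    apply Finset.sum_eq_zero
    intro e he
    have : e.Nonempty := Finset.card_pos.mp (by rw [hunif e he]; omega)
    obtain ⟨v, hv⟩ := this
    exact Finset.prod_eq_zero hv rfl
  -- N y = 1
  have hNy_pos : 0 < Np m y := by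
    rcases lt_or_eq_of_le (le_of_not_gt (fun hlt : Np m y < 0 => by
      have : 0 ≤ Np m y := Finset.sum_nonneg (fun i _ => pow_nonneg (hy0 i) m)
      linarith)) with h | h
    · exact h
    · exfalso
      have hy_eq : y = 0 := by
        funext i
        have h0 : ∑ j, y j ^ m = 0 := h.symm
        have := (Finset.sum_eq_zero_iff_of_nonneg
          (fun j (_ : j ∈ Finset.univ) => pow_nonneg (hy0 j) m)).mp h0 i (Finset.mem_univ i)
        exact pow_eq_zero_iff hm0 |>.mp this
      rw [hy_eq, hW0] at hWy_pos
      exact lt_irrefl 0 hWy_pos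
  have hNy1 : Np m y = 1 := by
    by_contra hne
    have hlt : Np m y < 1 := lt_of_le_of_ne hyN hne
    set t : ℝ := ((Np m y)⁻¹) ^ ((1:ℝ)/m) with ht
    have hti : 1 < (Np m y)⁻¹ := (one_lt_inv₀ hNy_pos).mpr hlt
    have ht1 : 1 < t := by
      rw [ht]
      rw [Real.one_lt_rpow_iff_of_pos (by positivity)]
      left
      exact ⟨hti, by positivity⟩
    have htm : t ^ m = (Np m y)⁻¹ := by
      rw [ht, ← Real.rpow_natCast (((Np m y)⁻¹) ^ ((1:ℝ)/m)) m, ← Real.rpow_mul (by positivity)]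
      rw [one_div_mul_cancel (by exact_mod_cast hm0), Real.rpow_one]
    set z : Fin n → ℝ := fun v => t * y v with hz
    have hzK : z ∈ K := by
      constructor
      · intro i; exact mul_nonneg (by linarith) (hy0 i)
      · rw [hz, np_homog, htm, inv_mul_cancel₀ (ne_of_gt hNy_pos)]
    have : Wp E z ≤ Wp E y := hymax' z hzK
    rw [hz, wp_homog E hunif] at this
    have htm1 : 1 < t ^ m := by
      rw [htm]; exact hti
    nlinarith
  set r : ℝ := m * Wp E y with hr
  have hr_pos : 0 < r := by
    rw [hr]; positivity
  -- the key global inequality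
  have hstar : ∀ z : Fin n → ℝ, (∀ i, 0 ≤ z i) → (m : ℝ) * Wp E z ≤ r * Np m z := by
    intro z hz0
    have hNz_nonneg : 0 ≤ Np m z := Finset.sum_nonneg (fun i _ => pow_nonneg (hz0 i) m)
    rcases eq_or_lt_of_le hNz_nonneg with h | h
    · have hz_eq : z = 0 := by
        funext i
        have := (Finset.sum_eq_zero_iff_of_nonneg
          (fun j (_ : j ∈ Finset.univ) => pow_nonneg (hz0 j) m)).mp h.symm i (Finset.mem_univ i)
        exact pow_eq_zero_iff hm0 |>.mp this
      have hN0 : Np m (0 : Fin n → ℝ) = 0 := by unfold Np; simp [zero_pow hm0]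
      rw [hz_eq, hW0, hN0]
      simp
    · set t : ℝ := ((Np m z)⁻¹) ^ ((1:ℝ)/m) with ht
      have ht_pos : 0 < t := by rw [ht]; positivity
      have htm : t ^ m = (Np m z)⁻¹ := by
        rw [ht, ← Real.rpow_natCast (((Np m z)⁻¹) ^ ((1:ℝ)/m)) m, ← Real.rpow_mul (by positivity)]
        rw [one_div_mul_cancel (by exact_mod_cast hm0), Real.rpow_one]
      set z' : Fin n → ℝ := fun v => t * z v with hz'
      have hz'K : z' ∈ K := by
        constructor
        · intro i; exact mul_nonneg (le_of_lt ht_pos) (hz0 i)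
        · rw [hz', np_homog, htm, inv_mul_cancel₀ (ne_of_gt h)]
      have h1 : Wp E z' ≤ Wp E y := hymax' z' hz'K
      rw [hz', wp_homog E hunif, htm] at h1
      have h2 : Wp E z ≤ Np m z * Wp E y := by
        rw [inv_mul_le_iff₀ h] at h1
        linarith [h1]
      calc (m:ℝ) * Wp E z ≤ (m:ℝ) * (Np m z * Wp E y) := by
            apply mul_le_mul_of_nonneg_left h2 (by positivity)
      _ = r * Np m z := by rw [hr]; ring
  -- positivity
  have hy_pos : ∀ i, 0 < y i := by
    by_contra hcon
    push_neg at hcon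
    obtain ⟨j, hj⟩ := hcon
    have hyj : y j = 0 := le_antisymm hj (hy0 j)
    -- some edge with all-positive vertices
    have : ∃ e₁ ∈ E, 0 < ∏ v ∈ e₁, y v := by
      by_contra hcon2
      push_neg at hcon2
      have : Wp E y ≤ 0 := Finset.sum_nonpos (fun e he => hcon2 e he)
      linarith
    obtain ⟨e₁, he₁E, he₁pos⟩ := this
    have he₁all : ∀ v ∈ e₁, 0 < y v := by
      intro v hv
      rcases lt_or_eq_of_le (hy0 v) with h | h
      · exact h
      · exfalso
        have : ∏ w ∈ e₁, y w = 0 := Finset.prod_eq_zero hv h.symm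
        linarith
    obtain ⟨u, hu⟩ := Finset.card_pos.mp (by rw [hunif e₁ he₁E]; omega : 0 < e₁.card)
    -- crossing edge
    have hcross : ∃ e ∈ E, (∃ a ∈ e, 0 < y a) ∧ (∃ b ∈ e, y b = 0) := by
      have key : ∀ w : Fin n, HConn E u w → 0 < y u → y w = 0 →
          ∃ e ∈ E, (∃ a ∈ e, 0 < y a) ∧ (∃ b ∈ e, y b = 0) := by
        intro w hw
        induction hw with
        | refl => intro h1 h2; exact absurd h2 (ne_of_gt h1)
        | @tail c w' huc step ih =>
            intro h1 h2
            obtain ⟨e, he, hc, hw'⟩ := step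
            by_cases hyc : 0 < y c
            · exact ⟨e, he, ⟨c, hc, hyc⟩, ⟨w', hw', h2⟩⟩
            · exact ih h1 (le_antisymm (not_lt.mp hyc) (hy0 c))
      exact key j (hconn u j) (he₁all u hu) hyj
    obtain ⟨e₂, he₂E, ⟨a, hae, hya⟩, ⟨b, hbe, hyb⟩⟩ := hcross
    set c₁ : ℝ := ∏ v ∈ e₂.filter (fun v => 0 < y v), y v with hc₁
    have hc₁pos : 0 < c₁ := by
      apply Finset.prod_pos
      intro v hv
      exact (Finset.mem_filter.mp hv).2
    set k : ℕ := (e₂.filter (fun v => ¬ 0 < y v)).card with hk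
    have hsplit : (e₂.filter (fun v => 0 < y v)).card + k = m := by
      rw [hk, Finset.card_filter_add_card_filter_not, hunif e₂ he₂E]
    have hposcard : 1 ≤ (e₂.filter (fun v => 0 < y v)).card := by
      rw [Nat.succ_le_iff, Finset.card_pos]
      exact ⟨a, Finset.mem_filter.mpr ⟨hae, hya⟩⟩
    have hkm : k ≤ m - 1 := by omega
    have hnpos : 0 < n := Fin.pos j
    -- for all small positive t, a contradiction estimate
    have hkey : ∀ t : ℝ, 0 < t → t ≤ 1 → (m:ℝ) * c₁ ≤ r * n * t := by
      intro t ht0 ht1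
      set z : Fin n → ℝ := fun v => if 0 < y v then y v else t with hz
      have hz0 : ∀ v, 0 ≤ z v := by
        intro v; simp only [hz]; split
        · exact le_of_lt (by assumption)
        · exact le_of_lt ht0
      have hyz : ∀ v, y v ≤ z v := by
        intro v; simp only [hz]; split
        · exact le_refl _
        · next h => rw [le_antisymm (not_lt.mp h) (hy0 v)]; exact le_of_lt ht0
      have he₂prod : ∏ v ∈ e₂, z v = c₁ * t ^ k := by
        rw [← Finset.prod_filter_mul_prod_filter_not e₂ (fun v => 0 < y v)]
        congr 1
        · rw [hc₁]
          apply Finset.prod_congr rfl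
          intro v hv
          simp only [hz, if_pos (Finset.mem_filter.mp hv).2]
        · rw [hk]
          rw [← Finset.prod_const]
          apply Finset.prod_congr rfl
          intro v hv
          simp only [hz, if_neg (Finset.mem_filter.mp hv).2]
      have hWlow : Wp E y + c₁ * t ^ (m-1) ≤ Wp E z := by
        have hWz : Wp E z = ∏ v ∈ e₂, z v + ∑ e ∈ E.erase e₂, ∏ v ∈ e, z v :=
          (Finset.add_sum_erase E (fun e => ∏ v ∈ e, z v) he₂E).symm
        have hWy : Wp E y = ∑ e ∈ E.erase e₂, ∏ v ∈ e, y v := by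
          have hz2 : (∏ v ∈ e₂, y v) = 0 := Finset.prod_eq_zero hbe hyb
          have h := Finset.add_sum_erase E (fun e => ∏ v ∈ e, y v) he₂E
          simp only [hz2, zero_add] at h
          exact h.symm
        have hsum_le : ∑ e ∈ E.erase e₂, ∏ v ∈ e, y v ≤ ∑ e ∈ E.erase e₂, ∏ v ∈ e, z v := by
          apply Finset.sum_le_sum
          intro e _
          exact Finset.prod_le_prod (fun v _ => hy0 v) (fun v _ => hyz v)
        have htk : c₁ * t ^ (m-1) ≤ ∏ v ∈ e₂, z v := by
          rw [he₂prod]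
          apply mul_le_mul_of_nonneg_left _ (le_of_lt hc₁pos)
          exact pow_le_pow_of_le_one (le_of_lt ht0) ht1 hkm
        rw [hWz, hWy]
        linarith
      have hNup : Np m z ≤ 1 + n * t ^ m := by
        unfold Np
        rw [← Finset.sum_filter_add_sum_filter_not Finset.univ (fun v => 0 < y v)
          (fun v => z v ^ m)]
        have h1 : ∑ v ∈ Finset.univ.filter (fun v => 0 < y v), z v ^ m ≤ 1 := by
          rw [← hNy1]
          unfold Np
          calc ∑ v ∈ Finset.univ.filter (fun v => 0 < y v), z v ^ m
              = ∑ v ∈ Finset.univ.filter (fun v => 0 < y v), y v ^ m := by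
                apply Finset.sum_congr rfl
                intro v hv
                simp only [hz, if_pos (Finset.mem_filter.mp hv).2]
          _ ≤ ∑ v, y v ^ m := by
                apply Finset.sum_le_sum_of_subset_of_nonneg (Finset.filter_subset _ _)
                intro v _ _
                exact pow_nonneg (hy0 v) m
        have h2 : ∑ v ∈ Finset.univ.filter (fun v => ¬ 0 < y v), z v ^ m ≤ n * t ^ m := by
          calc ∑ v ∈ Finset.univ.filter (fun v => ¬ 0 < y v), z v ^ m
              = ∑ v ∈ Finset.univ.filter (fun v => ¬ 0 < y v), t ^ m := by
                apply Finset.sum_congr rfl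
                intro v hv
                simp only [hz, if_neg (Finset.mem_filter.mp hv).2]
          _ = ((Finset.univ.filter (fun v : Fin n => ¬ 0 < y v)).card : ℝ) * t ^ m := by
                rw [Finset.sum_const, nsmul_eq_mul]
          _ ≤ n * t ^ m := by
                apply mul_le_mul_of_nonneg_right _ (pow_nonneg (le_of_lt ht0) m)
                have := Finset.card_filter_le Finset.univ (fun v : Fin n => ¬ 0 < y v)
                have hcu : (Finset.univ : Finset (Fin n)).card = n := by simp
                exact_mod_cast by omega
        linarith
      have hs := hstar z hz0
      have hchain : (m:ℝ) * (Wp E y + c₁ * t^(m-1)) ≤ r * (1 + n * t^m) := by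
        calc (m:ℝ) * (Wp E y + c₁ * t^(m-1)) ≤ (m:ℝ) * Wp E z := by
              apply mul_le_mul_of_nonneg_left hWlow (by positivity)
        _ ≤ r * Np m z := hs
        _ ≤ r * (1 + n * t^m) := by
              apply mul_le_mul_of_nonneg_left hNup (le_of_lt hr_pos)
      have hexp : (m:ℝ) * c₁ * t^(m-1) ≤ r * n * t^m := by
        have : (m:ℝ) * Wp E y = r := hr.symm
        nlinarith [hchain]
      have htm_split : t ^ m = t * t^(m-1) := by
        rw [← pow_succ']
        congr 1
        omega
      rw [htm_split] at hexp
      have htpow : 0 < t^(m-1) := pow_pos ht0 _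
      calc (m:ℝ) * c₁ = ((m:ℝ) * c₁ * t^(m-1)) / t^(m-1) := by field_simp
      _ ≤ (r * n * (t * t^(m-1))) / t^(m-1) := by gcongr
      _ = r * n * t := by field_simp
    -- choose small t
    have hrn : 0 < r * n := by positivity
    set t₀ : ℝ := min 1 ((m:ℝ) * c₁ / (2 * (r * n))) with ht₀
    have ht₀pos : 0 < t₀ := lt_min one_pos (by positivity)
    have ht₀le : t₀ ≤ 1 := min_le_left _ _
    have := hkey t₀ ht₀pos ht₀le
    have h2 : r * n * t₀ ≤ r * n * ((m:ℝ) * c₁ / (2 * (r * n))) :=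
      mul_le_mul_of_nonneg_left (min_le_right _ _) (le_of_lt hrn)
    have h3 : r * n * ((m:ℝ) * c₁ / (2 * (r * n))) = (m:ℝ) * c₁ / 2 := by
      field_simp
    have hmc : 0 < (m:ℝ) * c₁ := by positivity
    linarith
  -- the eigen-equation
  refine ⟨y, r, hr_pos, hy_pos, ?_, hNy1, hr⟩
  intro i
  have hyi := hy_pos i
  set P : ℝ := Pp E y i with hP
  set W₀ : ℝ := ∑ e ∈ E.filter (fun e => i ∉ e), ∏ v ∈ e, y v with hW₀
  have hupd_self : Function.update y i (y i) = y := Function.update_eq_self i y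
  have hbase : (m:ℝ) * (W₀ + y i * P) = r := by
    have := wp_update E hunif y i (y i)
    rw [hupd_self] at this
    rw [hr, this, hW₀, hP]
  have hstar' : ∀ t : ℝ, |t| < y i →
      r * (y i)^m - (m:ℝ) * (y i) * P ≤ r * (y i + t)^m - (m:ℝ) * (y i + t) * P := by
    intro t ht
    have habs := abs_lt.mp ht
    have h1 := hstar (Function.update y i (y i + t)) (by
      intro v
      by_cases hv : v = i
      · subst hv; rw [Function.update_self]; linarith [habs.1]
      · rw [Function.update_of_ne hv]; exact hy0 v)
    rw [wp_update E hunif, np_update, hNy1] at h1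
    rw [← hW₀, ← hP] at h1
    nlinarith [h1, hbase]
  set φ : ℝ → ℝ := fun t => r * (y i + t)^m - (m:ℝ) * (y i + t) * P with hφ
  have hmin : IsLocalMin φ 0 := by
    show ∀ᶠ t in nhds (0:ℝ), φ 0 ≤ φ t
    filter_upwards [Metric.ball_mem_nhds (0:ℝ) hyi] with t ht
    rw [Metric.mem_ball, Real.dist_eq, sub_zero] at ht
    have := hstar' t ht
    simp only [hφ, add_zero]
    linarith
  have hd1 : HasDerivAt (fun t : ℝ => y i + t) 1 0 := by
    simpa using (hasDerivAt_id (0:ℝ)).const_add (y i)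
  have hd2 : HasDerivAt (fun t : ℝ => (y i + t)^m) ((m:ℝ) * (y i + 0)^(m-1) * 1) 0 :=
    hd1.pow m
  have hd3 : HasDerivAt (fun t : ℝ => r * (y i + t)^m) (r * ((m:ℝ) * (y i + 0)^(m-1) * 1)) 0 :=
    hd2.const_mul r
  have hd4 : HasDerivAt (fun t : ℝ => (m:ℝ) * (y i + t) * P) ((m:ℝ) * 1 * P) 0 := by
    have := (hd1.const_mul (m:ℝ)).mul_const P
    simpa using this
  have hd5 : HasDerivAt φ (r * ((m:ℝ) * (y i + 0)^(m-1) * 1) - (m:ℝ) * 1 * P) 0 := hd3.sub hd4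
  have hzero := hmin.hasDerivAt_eq_zero hd5
  have hm' : (m:ℝ) ≠ 0 := by exact_mod_cast hm0
  rw [add_zero, mul_one, mul_one] at hzero
  have : r * ((m:ℝ) * (y i)^(m-1)) = (m:ℝ) * P := by linarith
  rw [hP] at *
  nlinarith [this]



lemma align {α : Type*} (s : Finset α) (F : α → ℂ)
    (h : ‖∑ a ∈ s, F a‖ = ∑ a ∈ s, ‖F a‖) :
    ∀ e ∈ s, ((‖F e‖ : ℂ)) * (∑ a ∈ s, F a)
      = ((∑ a ∈ s, ‖F a‖ : ℝ) : ℂ) * F e := by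
  intro e he
  have hsplit : ∑ a ∈ s, F a = F e + ∑ a ∈ s.erase e, F a := (Finset.add_sum_erase s F he).symm
  have habs_split : ∑ a ∈ s, ‖F a‖
      = ‖F e‖ + ∑ a ∈ s.erase e, ‖F a‖ :=
    (Finset.add_sum_erase s (fun a => ‖F a‖) he).symm
  have h1 : ‖∑ a ∈ s.erase e, F a‖ ≤ ∑ a ∈ s.erase e, ‖F a‖ := by
    calc ‖∑ a ∈ s.erase e, F a‖ ≤ ∑ a ∈ s.erase e, ‖F a‖ := norm_sum_le _ _
    _ = ∑ a ∈ s.erase e, ‖F a‖ := by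
        apply Finset.sum_congr rfl; intro a _; rfl
  have heq : ‖F e + ∑ a ∈ s.erase e, F a‖ = ‖F e‖ + ‖∑ a ∈ s.erase e, F a‖ := by
    apply le_antisymm (norm_add_le _ _)
    have h2 : ‖F e + ∑ a ∈ s.erase e, F a‖ = ∑ a ∈ s, ‖F a‖ := by
      rw [← hsplit, h]
    rw [h2, habs_split]
    exact add_le_add_right h1 _
  have hray : SameRay ℝ (F e) (∑ a ∈ s.erase e, F a) := sameRay_iff_norm_add.mpr heq
  have hray2 : SameRay ℝ (F e) (∑ a ∈ s, F a) := by
    rw [hsplit]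
    exact (SameRay.refl (F e)).add_right hray
  have hsm := hray2.norm_smul_eq
  calc ((‖F e‖ : ℂ)) * (∑ a ∈ s, F a)
      = (‖F e‖ : ℝ) • (∑ a ∈ s, F a) := by rw [Complex.real_smul]
  _ = (‖∑ a ∈ s, F a‖ : ℝ) • F e := hsm
  _ = ((∑ a ∈ s, ‖F a‖ : ℝ) : ℂ) * F e := by rw [h, Complex.real_smul]

section Main

variable {n m : ℕ}

lemma card_erase_of_unif {E : Finset (Finset (Fin n))} (hunif : ∀ e ∈ E, e.card = m)
    {e : Finset (Fin n)} (he : e ∈ E) {i : Fin n} (hi : i ∈ e) :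
    (e.erase i).card = m - 1 := by
  rw [Finset.card_erase_of_mem hi, hunif e he]

lemma prod_erase_le {E : Finset (Finset (Fin n))} (hunif : ∀ e ∈ E, e.card = m)
    {e : Finset (Fin n)} (he : e ∈ E) {i : Fin n} (hi : i ∈ e)
    {u y : Fin n → ℝ} (hu0 : ∀ k, 0 ≤ u k) {s : ℝ} (hle : ∀ k, u k ≤ s * y k) :
    ∏ v ∈ e.erase i, u v ≤ s ^ (m-1) * ∏ v ∈ e.erase i, y v := by
  calc ∏ v ∈ e.erase i, u v ≤ ∏ v ∈ e.erase i, (s * y v) :=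
        Finset.prod_le_prod (fun v _ => hu0 v) (fun v _ => hle v)
  _ = s ^ (m-1) * ∏ v ∈ e.erase i, y v := by
      rw [Finset.prod_mul_distrib, Finset.prod_const, card_erase_of_unif hunif he hi]

lemma pp_le {E : Finset (Finset (Fin n))} (hunif : ∀ e ∈ E, e.card = m)
    {u y : Fin n → ℝ} (hu0 : ∀ k, 0 ≤ u k) {s : ℝ} (hle : ∀ k, u k ≤ s * y k) (i : Fin n) :
    Pp E u i ≤ s ^ (m-1) * Pp E y i := by
  unfold Pp
  rw [Finset.mul_sum]
  apply Finset.sum_le_sum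
  intro e he
  obtain ⟨heE, hie⟩ := Finset.mem_filter.mp he
  exact prod_erase_le hunif heE hie hu0 hle

lemma eig_abs_le (hm : 2 ≤ m) (E : Finset (Finset (Fin n)))
    (hunif : ∀ e ∈ E, e.card = m) {y : Fin n → ℝ} {r : ℝ}
    (hy : ∀ i, 0 < y i) (heig : ∀ i, Pp E y i = r * y i ^ (m - 1)) :
    ∀ l ∈ Eigenvalues (adjT n m E), ‖l‖ ≤ r := by
  rintro l ⟨x, hx0, hxe⟩
  obtain ⟨j, hj⟩ := Function.ne_iff.mp hx0
  obtain ⟨i₀, -, hmax⟩ := Finset.exists_max_image Finset.univ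
    (fun i => ‖x i‖ / y i) ⟨j, Finset.mem_univ j⟩
  set s : ℝ := ‖x i₀‖ / y i₀ with hs
  have hle : ∀ k, ‖x k‖ ≤ s * y k := by
    intro k
    have := hmax k (Finset.mem_univ k)
    rwa [div_le_iff₀ (hy k)] at this
  have hs_pos : 0 < s := by
    have h1 : 0 < ‖x j‖ / y j := by
      apply div_pos _ (hy j)
      simpa using hj
    exact lt_of_lt_of_le h1 (hmax j (Finset.mem_univ j))
  have hxi₀ : ‖x i₀‖ = s * y i₀ := by
    rw [hs, div_mul_cancel₀ _ (ne_of_gt (hy i₀))]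
  have key : ‖l‖ * (s * y i₀) ^ (m-1) ≤ r * (s * y i₀) ^ (m-1) := by
    calc ‖l‖ * (s * y i₀) ^ (m-1)
        = ‖l * x i₀ ^ (m-1)‖ := by
          rw [norm_mul, norm_pow, hxi₀]
    _ = ‖tApp (adjT n m E) x i₀‖ := by rw [hxe i₀]
    _ = ‖∑ e ∈ E.filter (fun e => i₀ ∈ e), ∏ v ∈ e.erase i₀, x v‖ := by
          rw [tApp_adjT hm E hunif]
    _ ≤ ∑ e ∈ E.filter (fun e => i₀ ∈ e), ‖∏ v ∈ e.erase i₀, x v‖ := by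
          simpa using
            norm_sum_le (E.filter (fun e => i₀ ∈ e)) (fun e => ∏ v ∈ e.erase i₀, x v)
    _ = Pp E (fun k => ‖x k‖) i₀ := by
          unfold Pp
          apply Finset.sum_congr rfl
          intro e _
          rw [norm_prod]
    _ ≤ s ^ (m-1) * Pp E y i₀ := pp_le hunif (fun k => norm_nonneg _) hle i₀
    _ = r * (s * y i₀) ^ (m-1) := by rw [heig i₀, mul_pow]; ring
  have hpow : 0 < (s * y i₀) ^ (m-1) := pow_pos (mul_pos hs_pos (hy i₀)) _
  exact le_of_mul_le_mul_right key hpow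

lemma pp_cast (E : Finset (Finset (Fin n))) (y : Fin n → ℝ) (i : Fin n) :
    ∑ e ∈ E.filter (fun e => i ∈ e), ∏ v ∈ e.erase i, ((y v : ℂ))
      = ((Pp E y i : ℝ) : ℂ) := by
  unfold Pp
  push_cast
  rfl

lemma r_is_eig (hm : 2 ≤ m) (E : Finset (Finset (Fin n)))
    (hunif : ∀ e ∈ E, e.card = m) {y : Fin n → ℝ} {r : ℝ} (i₀ : Fin n)
    (hy : ∀ i, 0 < y i) (heig : ∀ i, Pp E y i = r * y i ^ (m - 1)) :
    IsEigPair (adjT n m E) ((r : ℝ) : ℂ) (fun i => ((y i : ℂ))) := by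
  constructor
  · intro h0
    have := congrFun h0 i₀
    simp only [Pi.zero_apply, Complex.ofReal_eq_zero] at this
    exact absurd this (ne_of_gt (hy i₀))
  · intro i
    rw [tApp_adjT hm E hunif, pp_cast, heig i]
    push_cast
    ring

lemma specRad_eq (hm : 2 ≤ m) (E : Finset (Finset (Fin n)))
    (hunif : ∀ e ∈ E, e.card = m) {y : Fin n → ℝ} {r : ℝ} (i₀ : Fin n) (hr : 0 < r)
    (hy : ∀ i, 0 < y i) (heig : ∀ i, Pp E y i = r * y i ^ (m - 1)) :
    specRad (adjT n m E) = r := by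
  have hmem : ((r:ℝ):ℂ) ∈ Eigenvalues (adjT n m E) :=
    ⟨_, r_is_eig hm E hunif i₀ hy heig⟩
  have himg : r ∈ (fun z : ℂ => ‖z‖) '' Eigenvalues (adjT n m E) :=
    ⟨((r:ℝ):ℂ), hmem, by simp only [Complex.norm_real, Real.norm_eq_abs, abs_of_pos hr]⟩
  apply le_antisymm
  · apply csSup_le ⟨r, himg⟩
    rintro _ ⟨l, hl, rfl⟩
    exact eig_abs_le hm E hunif hy heig l hl
  · apply le_csSup
    · refine ⟨r, ?_⟩
      rintro _ ⟨l, hl, rfl⟩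
      exact eig_abs_le hm E hunif hy heig l hl
    · exact himg

lemma rigid (hm : 2 ≤ m) (E : Finset (Finset (Fin n)))
    (hunif : ∀ e ∈ E, e.card = m) (hconn : ∀ u w : Fin n, HConn E u w)
    {y : Fin n → ℝ} {r : ℝ} (hr : 0 < r)
    (hy : ∀ i, 0 < y i) (heig : ∀ i, Pp E y i = r * y i ^ (m - 1))
    (u : Fin n → ℝ) (hu0 : ∀ i, 0 ≤ u i) (hune : ∃ j, u j ≠ 0)
    (hsub : ∀ i, r * u i ^ (m - 1) ≤ Pp E u i) :
    ∃ s : ℝ, 0 < s ∧ ∀ i, u i = s * y i := by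
  obtain ⟨j, hj⟩ := hune
  obtain ⟨i₁, -, hmax⟩ := Finset.exists_max_image Finset.univ
    (fun i => u i / y i) ⟨j, Finset.mem_univ j⟩
  set s : ℝ := u i₁ / y i₁ with hs
  have hle : ∀ k, u k ≤ s * y k := by
    intro k
    have := hmax k (Finset.mem_univ k)
    rwa [div_le_iff₀ (hy k)] at this
  have hs_pos : 0 < s := by
    have h1 : 0 < u j / y j := div_pos (lt_of_le_of_ne (hu0 j) (Ne.symm hj)) (hy j)
    exact lt_of_lt_of_le h1 (hmax j (Finset.mem_univ j))
  refine ⟨s, hs_pos, ?_⟩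
  have step : ∀ i, u i = s * y i → ∀ e ∈ E, i ∈ e → ∀ v ∈ e, u v = s * y v := by
    intro i hi e heE hie v hve
    have h1 : Pp E u i ≤ s ^ (m-1) * Pp E y i := pp_le hunif hu0 hle i
    have h2 : s ^ (m-1) * Pp E y i = r * u i ^ (m-1) := by
      rw [heig i, hi, mul_pow]; ring
    have hEq : Pp E u i = s ^ (m-1) * Pp E y i :=
      le_antisymm h1 (by rw [h2]; exact hsub i)
    have hterm : ∀ e' ∈ E.filter (fun e' => i ∈ e'),
        ∏ v ∈ e'.erase i, u v = s ^ (m-1) * ∏ v ∈ e'.erase i, y v := by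
      have hle' : ∀ e' ∈ E.filter (fun e' => i ∈ e'),
          ∏ v ∈ e'.erase i, u v ≤ s ^ (m-1) * ∏ v ∈ e'.erase i, y v := by
        intro e' he'
        obtain ⟨he'E, hie'⟩ := Finset.mem_filter.mp he'
        exact prod_erase_le hunif he'E hie' hu0 hle
      have hsum_eq : ∑ e' ∈ E.filter (fun e' => i ∈ e'), ∏ v ∈ e'.erase i, u v
          = ∑ e' ∈ E.filter (fun e' => i ∈ e'), (s ^ (m-1) * ∏ v ∈ e'.erase i, y v) := by
        have : Pp E u i = s ^ (m-1) * Pp E y i := hEq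
        unfold Pp at this
        rw [Finset.mul_sum] at this
        exact this
      exact (Finset.sum_eq_sum_iff_of_le hle').mp hsum_eq
    have hprod_eq : ∏ v ∈ e.erase i, u v = ∏ v ∈ e.erase i, (fun k => s * y k) v := by
      have := hterm e (Finset.mem_filter.mpr ⟨heE, hie⟩)
      rw [this]
      rw [Finset.prod_mul_distrib, Finset.prod_const, card_erase_of_unif hunif heE hie]
    by_cases hvi : v = i
    · rw [hvi]; exact hi
    · exact prod_factor_eq (e.erase i) u (fun k => s * y k)
        (fun w _ => hu0 w) (fun w _ => hle w)
        (fun w _ => mul_pos hs_pos (hy w)) hprod_eq v (Finset.mem_erase.mpr ⟨hvi, hve⟩)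
  have hbase : u i₁ = s * y i₁ := by
    rw [hs, div_mul_cancel₀ _ (ne_of_gt (hy i₁))]
  intro i
  have key : ∀ w : Fin n, HConn E i₁ w → u w = s * y w := by
    intro w hw
    induction hw with
    | refl => exact hbase
    | @tail c w' huc stp ih =>
        obtain ⟨e, he, hc, hw'⟩ := stp
        exact step c ih e he hc w' hw'
  exact key i (hconn i₁ i)

end Main


section Struct

variable {n m : ℕ}

/-- totalized map from diagonal data to projective points -/
noncomputable def gmap (y : Fin n → ℝ) (hy : (fun i => ((y i : ℝ) : ℂ)) ≠ 0)
    (d : Fin n → ℂ) : Projectivization ℂ (Fin n → ℂ) :=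
  if h : (fun i => d i * ((y i : ℝ) : ℂ)) ≠ 0 then Projectivization.mk ℂ _ h
  else Projectivization.mk ℂ _ hy

def Tset (E : Finset (Finset (Fin n))) (m : ℕ) (r : ℝ) (i₀ : Fin n) (μ : ℂ) :
    Set (Fin n → ℂ) :=
  {d | d i₀ = 1 ∧ (∀ i, d i ^ m = 1) ∧
    ∀ e ∈ E, ∀ i ∈ e, μ * d i ^ (m - 1) = (r : ℂ) * ∏ v ∈ e.erase i, d v}

lemma pv_eq (hm : 2 ≤ m) (E : Finset (Finset (Fin n)))
    (hunif : ∀ e ∈ E, e.card = m) (hconn : ∀ u w : Fin n, HConn E u w)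
    {y : Fin n → ℝ} {r : ℝ} (i₀ : Fin n) (hr : 0 < r)
    (hy : ∀ i, 0 < y i) (heig : ∀ i, Pp E y i = r * y i ^ (m - 1))
    (hyne : (fun i => ((y i : ℝ) : ℂ)) ≠ 0)
    (μ : ℂ) (hμ : ‖μ‖ = r) :
    PV (adjT n m E) μ = gmap y hyne '' Tset E m r i₀ μ := by
  have hm0 : m ≠ 0 := by omega
  have hm1 : m - 1 + 1 = m := by omega
  have hrC : ((r : ℝ) : ℂ) ≠ 0 := by
    simp only [ne_eq, Complex.ofReal_eq_zero]
    exact ne_of_gt hr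
  have hμ0 : μ ≠ 0 := by
    intro h
    rw [h] at hμ
    simp at hμ
    exact absurd hμ.symm (ne_of_gt hr)
  ext p
  constructor
  · rintro ⟨x, hx0, hmk, heigx⟩
    set u : Fin n → ℝ := fun i => ‖x i‖ with hu
    have hu0 : ∀ i, 0 ≤ u i := fun i => norm_nonneg _
    have hune : ∃ j, u j ≠ 0 := by
      obtain ⟨j, hj⟩ := Function.ne_iff.mp hx0
      exact ⟨j, by simpa [hu] using hj⟩
    have habs_tApp : ∀ i, ‖∑ e ∈ E.filter (fun e => i ∈ e), ∏ v ∈ e.erase i, x v‖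
        = r * u i ^ (m - 1) := by
      intro i
      rw [← tApp_adjT hm E hunif, heigx i, norm_mul, norm_pow, hμ]
    have habs_sum : ∀ i, ∑ e ∈ E.filter (fun e => i ∈ e),
        ‖∏ v ∈ e.erase i, x v‖ = Pp E u i := by
      intro i
      unfold Pp
      apply Finset.sum_congr rfl
      intro e _
      rw [norm_prod]
    have hsub : ∀ i, r * u i ^ (m - 1) ≤ Pp E u i := by
      intro i
      rw [← habs_tApp i, ← habs_sum i]
      simpa using
        norm_sum_le (E.filter (fun e => i ∈ e)) (fun e => ∏ v ∈ e.erase i, x v)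
    obtain ⟨s, hs_pos, hus⟩ := rigid hm E hunif hconn hr hy heig u hu0 hune hsub
    have hupos : ∀ i, 0 < u i := fun i => (hus i) ▸ mul_pos hs_pos (hy i)
    have hxne : ∀ i, x i ≠ 0 := by
      intro i
      have := hupos i
      intro h
      rw [hu] at this
      simp only [h, norm_zero] at this
      exact lt_irrefl 0 this
    have hcune : ∀ i, ((u i : ℝ) : ℂ) ≠ 0 := by
      intro i
      simp only [ne_eq, Complex.ofReal_eq_zero]
      exact ne_of_gt (hupos i)
    have hppu : ∀ i, Pp E u i = r * u i ^ (m - 1) := by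
      intro i
      have huf : u = fun k => s * y k := funext hus
      have h1 : Pp E u i = s ^ (m-1) * Pp E y i := by
        unfold Pp
        rw [Finset.mul_sum]
        apply Finset.sum_congr rfl
        intro e he
        obtain ⟨heE, hie⟩ := Finset.mem_filter.mp he
        rw [huf]
        rw [Finset.prod_mul_distrib, Finset.prod_const, card_erase_of_unif hunif heE hie]
      rw [h1, heig i, hus i, mul_pow]
      ring
    -- alignment
    have habs_eq : ∀ i, ‖∑ e ∈ E.filter (fun e => i ∈ e), ∏ v ∈ e.erase i, x v‖
        = ∑ e ∈ E.filter (fun e => i ∈ e), ‖∏ v ∈ e.erase i, x v‖ := by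
      intro i
      rw [habs_tApp i, habs_sum i, hppu i]
    have halign : ∀ i, ∀ e ∈ E.filter (fun e => i ∈ e),
        ((∏ v ∈ e.erase i, u v : ℝ) : ℂ) * (μ * x i ^ (m - 1))
          = ((r * u i ^ (m - 1) : ℝ) : ℂ) * ∏ v ∈ e.erase i, x v := by
      intro i e he
      have h := align (E.filter (fun e => i ∈ e)) (fun e => ∏ v ∈ e.erase i, x v)
        (habs_eq i) e he
      have h2 : (∑ a ∈ E.filter (fun e => i ∈ e), ∏ v ∈ a.erase i, x v) = μ * x i ^ (m-1) := by
        rw [← tApp_adjT hm E hunif, heigx i]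
      have h3 : ‖∏ v ∈ e.erase i, x v‖ = ∏ v ∈ e.erase i, u v := norm_prod _ _
      have h4 : ∑ a ∈ E.filter (fun e => i ∈ e), ‖∏ v ∈ a.erase i, x v‖
          = r * u i ^ (m-1) := by rw [habs_sum i, hppu i]
      rw [h2, h3, h4] at h
      exact h
    -- the phase vector
    set ψ : Fin n → ℂ := fun i => x i / ((u i : ℝ) : ℂ) with hψ
    have hψne : ∀ i, ψ i ≠ 0 := fun i => div_ne_zero (hxne i) (hcune i)
    have hxψ : ∀ i, x i = ψ i * ((u i : ℝ) : ℂ) := by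
      intro i
      simp only [hψ]
      rw [div_mul_cancel₀ _ (hcune i)]
    -- per-edge m-th power relation
    have hedge : ∀ e ∈ E, ∀ i ∈ e,
        μ * ψ i ^ m = (r : ℂ) * (∏ v ∈ e, x v) / (∏ v ∈ e, ((u v : ℝ) : ℂ)) := by
      intro e heE i hie
      have h := halign i e (Finset.mem_filter.mpr ⟨heE, hie⟩)
      have hPu : (∏ v ∈ e, ((u v : ℝ) : ℂ)) ≠ 0 := Finset.prod_ne_zero_iff.mpr (fun v _ => hcune v)
      have hPuer : (∏ v ∈ e.erase i, ((u v : ℝ) : ℂ)) ≠ 0 :=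
        Finset.prod_ne_zero_iff.mpr (fun v _ => hcune v)
      -- multiply h by x i * u i
      have hmul : ((∏ v ∈ e.erase i, u v : ℝ) : ℂ) * ((u i : ℝ) : ℂ) * (μ * x i ^ m)
          = ((r * u i ^ (m - 1) : ℝ) : ℂ) * ((u i : ℝ) : ℂ) * (x i * ∏ v ∈ e.erase i, x v) := by
        have hx_pow : x i ^ (m - 1) * x i = x i ^ m := by
          rw [← pow_succ, hm1]
        calc ((∏ v ∈ e.erase i, u v : ℝ) : ℂ) * ((u i : ℝ) : ℂ) * (μ * x i ^ m)
            = (((∏ v ∈ e.erase i, u v : ℝ) : ℂ) * (μ * x i ^ (m-1))) * (((u i : ℝ) : ℂ) * x i) := by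
              rw [← hx_pow]; ring
        _ = (((r * u i ^ (m - 1) : ℝ) : ℂ) * ∏ v ∈ e.erase i, x v) * (((u i : ℝ) : ℂ) * x i) := by
              rw [h]
        _ = ((r * u i ^ (m - 1) : ℝ) : ℂ) * ((u i : ℝ) : ℂ) * (x i * ∏ v ∈ e.erase i, x v) := by
              ring
      have hprod_u : ((∏ v ∈ e.erase i, u v : ℝ) : ℂ) * ((u i : ℝ) : ℂ)
          = ∏ v ∈ e, ((u v : ℝ) : ℂ) := by
        push_cast
        rw [Finset.prod_erase_mul e _ hie]
      have hprod_x : x i * ∏ v ∈ e.erase i, x v = ∏ v ∈ e, x v := Finset.mul_prod_erase e x hie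
      rw [hprod_u, hprod_x] at hmul
      -- now hmul : Pu * (μ * x i ^ m) = (r * u i^{m-1} : ℂ) * u i * Px
      have hupow : (((u i : ℝ) : ℂ)) ^ (m-1) * ((u i : ℝ) : ℂ) = (((u i : ℝ) : ℂ)) ^ m := by
        rw [← pow_succ, hm1]
      have hcui : ((r * u i ^ (m-1) : ℝ) : ℂ) * ((u i : ℝ) : ℂ)
          = (r : ℂ) * ((u i : ℝ) : ℂ) ^ m := by
        push_cast
        rw [mul_assoc, hupow]
      rw [hcui] at hmul
      -- ψ i ^ m = x i ^ m / u i ^ m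
      simp only [hψ]
      rw [div_pow, ← mul_div_assoc, div_eq_div_iff (pow_ne_zero m (hcune i)) hPu]
      linear_combination hmul
    -- ψ^m is constant along edges hence globally
    have hedgeconst : ∀ a b : Fin n, (∃ e ∈ E, a ∈ e ∧ b ∈ e) → ψ a ^ m = ψ b ^ m := by
      rintro a b ⟨e, heE, ha, hb⟩
      have h1 := hedge e heE a ha
      have h2 := hedge e heE b hb
      have := h1.trans h2.symm
      exact mul_left_cancel₀ hμ0 this
    have hglobal : ∀ b : Fin n, ψ i₀ ^ m = ψ b ^ m := by
      intro b
      have key : ∀ w : Fin n, HConn E i₀ w → ψ i₀ ^ m = ψ w ^ m := by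
        intro w hw
        induction hw with
        | refl => rfl
        | @tail c w' huc stp ih => exact ih.trans (hedgeconst c w' stp)
      exact key b (hconn i₀ b)
    set d : Fin n → ℂ := fun i => ψ i / ψ i₀ with hd
    have hd0 : d i₀ = 1 := div_self (hψne i₀)
    have hdm : ∀ i, d i ^ m = 1 := by
      intro i
      rw [hd]
      simp only
      rw [div_pow, ← hglobal i, div_self (pow_ne_zero _ (hψne i₀))]
    have hψrel : ∀ i, ∀ e ∈ E, i ∈ e → μ * ψ i ^ (m-1) = (r:ℂ) * ∏ v ∈ e.erase i, ψ v := by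
      intro i e heE hie
      have h := halign i e (Finset.mem_filter.mpr ⟨heE, hie⟩)
      have hPuer : (∏ v ∈ e.erase i, ((u v : ℝ) : ℂ)) ≠ 0 :=
        Finset.prod_ne_zero_iff.mpr (fun v _ => hcune v)
      have hx_er : ∏ v ∈ e.erase i, x v
          = (∏ v ∈ e.erase i, ψ v) * ∏ v ∈ e.erase i, ((u v : ℝ) : ℂ) := by
        rw [← Finset.prod_mul_distrib]
        apply Finset.prod_congr rfl
        intro v _
        exact hxψ v
      have hxi_pow : x i ^ (m-1) = ψ i ^ (m-1) * ((u i : ℝ) : ℂ) ^ (m-1) := by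
        rw [hxψ i, mul_pow]
      have hcast1 : ((∏ v ∈ e.erase i, u v : ℝ) : ℂ) = ∏ v ∈ e.erase i, ((u v : ℝ) : ℂ) := by
        push_cast; rfl
      have hcast2 : ((r * u i ^ (m-1) : ℝ) : ℂ) = (r:ℂ) * ((u i : ℝ) : ℂ) ^ (m-1) := by
        push_cast; rfl
      rw [hcast1, hcast2, hx_er, hxi_pow] at h
      have hui_pow : (((u i : ℝ) : ℂ)) ^ (m-1) ≠ 0 := pow_ne_zero _ (hcune i)
      have hfac : (∏ v ∈ e.erase i, ((u v : ℝ) : ℂ)) * ((u i : ℝ) : ℂ) ^ (m-1) ≠ 0 :=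
        mul_ne_zero hPuer hui_pow
      apply mul_right_cancel₀ hfac
      linear_combination h
    have hdedge : ∀ e ∈ E, ∀ i ∈ e, μ * d i ^ (m-1) = (r:ℂ) * ∏ v ∈ e.erase i, d v := by
      intro e heE i hie
      have h := hψrel i e heE hie
      have hψ₀pow : ψ i₀ ^ (m-1) ≠ 0 := pow_ne_zero _ (hψne i₀)
      have hprod_d : ∏ v ∈ e.erase i, d v
          = (∏ v ∈ e.erase i, ψ v) / ψ i₀ ^ (m-1) := by
        rw [hd]
        simp only
        rw [Finset.prod_div_distrib, Finset.prod_const, card_erase_of_unif hunif heE hie]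
      rw [hprod_d]
      simp only [hd]
      rw [div_pow, ← mul_div_assoc, ← mul_div_assoc, h]
    -- now show p is in the image
    refine ⟨d, ⟨hd0, hdm, hdedge⟩, ?_⟩
    set xd : Fin n → ℂ := fun i => d i * ((y i : ℝ) : ℂ) with hxd
    have hxd0 : xd ≠ 0 := by
      intro h
      have := congrFun h i₀
      simp only [hxd, hd0, one_mul, Pi.zero_apply, Complex.ofReal_eq_zero] at this
      exact absurd this (ne_of_gt (hy i₀))
    have hgm : gmap y hyne d = Projectivization.mk ℂ xd hxd0 := by
      unfold gmap
      rw [dif_pos hxd0]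
    have hsC : ((s : ℝ) : ℂ) ≠ 0 := by
      simp only [ne_eq, Complex.ofReal_eq_zero]
      exact ne_of_gt hs_pos
    have hne : ψ i₀ * ((s : ℝ) : ℂ) ≠ 0 := mul_ne_zero (hψne i₀) hsC
    have hui : ∀ i, ((u i : ℝ) : ℂ) = ((s : ℝ) : ℂ) * ((y i : ℝ) : ℂ) := by
      intro i
      rw [hus i]; push_cast; rfl
    have hψi : ∀ i, ψ i = d i * ψ i₀ := by
      intro i
      simp only [hd]
      rw [div_mul_cancel₀ _ (hψne i₀)]
    have hcomp : ∀ i, x i = (ψ i₀ * ((s : ℝ) : ℂ)) * (d i * ((y i : ℝ) : ℂ)) := by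
      intro i
      calc x i = ψ i * ((u i : ℝ) : ℂ) := hxψ i
      _ = (d i * ψ i₀) * (((s : ℝ) : ℂ) * ((y i : ℝ) : ℂ)) := by rw [← hψi, ← hui]
      _ = (ψ i₀ * ((s : ℝ) : ℂ)) * (d i * ((y i : ℝ) : ℂ)) := by ring
    rw [hgm, ← hmk]
    rw [Projectivization.mk_eq_mk_iff']
    refine ⟨(ψ i₀ * ((s : ℝ) : ℂ))⁻¹, ?_⟩
    funext i
    simp only [Pi.smul_apply, smul_eq_mul, hxd]
    rw [hcomp i, ← mul_assoc, inv_mul_cancel₀ hne, one_mul]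
  · rintro ⟨d, ⟨hd0, hdm, hdedge⟩, rfl⟩
    set x : Fin n → ℂ := fun i => d i * ((y i : ℝ) : ℂ) with hx
    have hdne : ∀ i, d i ≠ 0 := by
      intro i h
      have := hdm i
      rw [h] at this
      simp [zero_pow hm0] at this
    have hx0 : x ≠ 0 := by
      intro h
      have := congrFun h i₀
      simp only [hx, hd0, one_mul, Pi.zero_apply, Complex.ofReal_eq_zero] at this
      exact absurd this (ne_of_gt (hy i₀))
    have hgm : gmap y hyne d = Projectivization.mk ℂ x hx0 := by
      unfold gmap
      rw [dif_pos hx0]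
    rw [hgm]
    refine ⟨x, hx0, rfl, ?_⟩
    intro i
    rw [tApp_adjT hm E hunif]
    apply mul_left_cancel₀ hrC
    have hterm : ∀ e ∈ E.filter (fun e => i ∈ e),
        ((r : ℝ) : ℂ) * ∏ v ∈ e.erase i, x v
          = μ * d i ^ (m-1) * ∏ v ∈ e.erase i, ((y v : ℝ) : ℂ) := by
      intro e he
      obtain ⟨heE, hie⟩ := Finset.mem_filter.mp he
      have hsplit : ∏ v ∈ e.erase i, x v
          = (∏ v ∈ e.erase i, d v) * ∏ v ∈ e.erase i, ((y v : ℝ) : ℂ) := by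
        rw [← Finset.prod_mul_distrib]
      rw [hsplit, ← mul_assoc, ← hdedge e heE i hie]
    rw [Finset.mul_sum, Finset.sum_congr rfl hterm, ← Finset.mul_sum, pp_cast, heig i]
    have hxi : x i = d i * ((y i : ℝ) : ℂ) := rfl
    rw [hxi]
    push_cast
    ring

end Struct


section Count

variable {n m : ℕ}

lemma tset_finite (hm0 : m ≠ 0) (E : Finset (Finset (Fin n))) (r : ℝ) (i₀ : Fin n) (μ : ℂ) :
    (Tset E m r i₀ μ).Finite := by
  have hroots : {z : ℂ | z ^ m = 1}.Finite := by
    apply Set.Finite.subset (Finset.finite_toSet (Polynomial.nthRoots m (1:ℂ)).toFinset)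
    intro z hz
    simp only [Set.mem_setOf_eq] at hz
    simp only [Finset.coe_sort_coe, Multiset.mem_toFinset, Finset.mem_coe]
    rw [Polynomial.mem_nthRoots (Nat.pos_of_ne_zero hm0)]
    exact hz
  apply Set.Finite.subset (Set.Finite.pi (fun _ : Fin n => hroots))
  intro d hd
  rw [Set.mem_pi]
  intro i _
  exact hd.2.1 i

lemma gmap_injOn (E : Finset (Finset (Fin n))) {y : Fin n → ℝ} (r : ℝ) (i₀ : Fin n)
    (hy : ∀ i, 0 < y i) (hyne : (fun i => ((y i : ℝ) : ℂ)) ≠ 0) (μ : ℂ) :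
    Set.InjOn (gmap y hyne) (Tset E m r i₀ μ) := by
  intro d hd d' hd' heq
  have hxd0 : (fun i => d i * ((y i : ℝ) : ℂ)) ≠ 0 := by
    intro h
    have := congrFun h i₀
    simp only [hd.1, one_mul, Pi.zero_apply, Complex.ofReal_eq_zero] at this
    exact absurd this (ne_of_gt (hy i₀))
  have hxd'0 : (fun i => d' i * ((y i : ℝ) : ℂ)) ≠ 0 := by
    intro h
    have := congrFun h i₀
    simp only [hd'.1, one_mul, Pi.zero_apply, Complex.ofReal_eq_zero] at this
    exact absurd this (ne_of_gt (hy i₀))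
  unfold gmap at heq
  rw [dif_pos hxd0, dif_pos hxd'0] at heq
  rw [Projectivization.mk_eq_mk_iff'] at heq
  obtain ⟨a, ha⟩ := heq
  have ha' : ∀ i, a * (d' i * ((y i : ℝ) : ℂ)) = d i * ((y i : ℝ) : ℂ) := by
    intro i
    exact congrFun ha i
  have hyC : ∀ i, ((y i : ℝ) : ℂ) ≠ 0 := by
    intro i
    simp only [ne_eq, Complex.ofReal_eq_zero]
    exact ne_of_gt (hy i)
  have had : ∀ i, a * d' i = d i := by
    intro i
    have := ha' i
    have h2 : (a * d' i) * ((y i : ℝ) : ℂ) = d i * ((y i : ℝ) : ℂ) := by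
      rw [← this]; ring
    exact mul_right_cancel₀ (hyC i) h2
  have ha1 : a = 1 := by
    have := had i₀
    rw [hd'.1, hd.1, mul_one] at this
    exact this
  funext i
  have := had i
  rw [ha1, one_mul] at this
  exact this.symm

lemma tset_translate (hm : 2 ≤ m) (E : Finset (Finset (Fin n))) {r : ℝ} (i₀ : Fin n)
    (hr : 0 < r) {l : ℂ} (hl0 : l ≠ 0) {d₀ : Fin n → ℂ} (hd₀ : d₀ ∈ Tset E m r i₀ l) :
    Tset E m r i₀ l = (fun d => fun i => d₀ i * d i) '' Tset E m r i₀ ((r : ℝ) : ℂ) := by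
  have hm0 : m ≠ 0 := by omega
  have hrC : ((r : ℝ) : ℂ) ≠ 0 := by
    simp only [ne_eq, Complex.ofReal_eq_zero]; exact ne_of_gt hr
  obtain ⟨hd₀0, hd₀m, hd₀e⟩ := hd₀
  have hd₀ne : ∀ i, d₀ i ≠ 0 := by
    intro i h
    have := hd₀m i
    rw [h] at this
    simp [zero_pow hm0] at this
  ext d
  constructor
  · rintro ⟨hd0, hdm, hde⟩
    refine ⟨fun i => (d₀ i)⁻¹ * d i, ⟨?_, ?_, ?_⟩, ?_⟩
    · show (d₀ i₀)⁻¹ * d i₀ = 1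
      rw [hd0, hd₀0]
      simp
    · intro i
      show ((d₀ i)⁻¹ * d i) ^ m = 1
      rw [mul_pow, inv_pow, hdm i, hd₀m i]
      simp
    · intro e heE i hie
      have h1 := hde e heE i hie
      have h2 := hd₀e e heE i hie
      have hP₀ne : (∏ v ∈ e.erase i, d₀ v) ≠ 0 :=
        Finset.prod_ne_zero_iff.mpr (fun v _ => hd₀ne v)
      have hd₀ipow : d₀ i ^ (m-1) ≠ 0 := pow_ne_zero _ (hd₀ne i)
      show ((r:ℝ):ℂ) * ((d₀ i)⁻¹ * d i) ^ (m-1)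
          = ((r:ℝ):ℂ) * ∏ v ∈ e.erase i, ((d₀ v)⁻¹ * d v)
      rw [Finset.prod_mul_distrib, Finset.prod_inv_distrib, mul_pow, inv_pow]
      have key : d i ^ (m-1) * ∏ v ∈ e.erase i, d₀ v
          = d₀ i ^ (m-1) * ∏ v ∈ e.erase i, d v := by
        have hcancel : (l * (r:ℂ)) * (d i ^ (m-1) * ∏ v ∈ e.erase i, d₀ v)
            = (l * (r:ℂ)) * (d₀ i ^ (m-1) * ∏ v ∈ e.erase i, d v) := by
          linear_combination ((r:ℂ) * ∏ v ∈ e.erase i, d₀ v) * h1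
            - ((r:ℂ) * ∏ v ∈ e.erase i, d v) * h2
        exact mul_left_cancel₀ (mul_ne_zero hl0 hrC) hcancel
      congr 1
      rw [← div_eq_inv_mul, ← div_eq_inv_mul, div_eq_div_iff hd₀ipow hP₀ne, key]
      ring
    · funext i
      simp only
      rw [← mul_assoc, mul_inv_cancel₀ (hd₀ne i), one_mul]
  · rintro ⟨d', ⟨hd'0, hd'm, hd'e⟩, rfl⟩
    refine ⟨?_, ?_, ?_⟩
    · simp only [hd'0, hd₀0, mul_one]
    · intro i
      rw [mul_pow, hd'm i, hd₀m i]
      simp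
    · intro e heE i hie
      have h1 := hd'e e heE i hie
      have h2 := hd₀e e heE i hie
      have hdd : (∏ v ∈ e.erase i, d₀ v * d' v)
          = (∏ v ∈ e.erase i, d₀ v) * ∏ v ∈ e.erase i, d' v := Finset.prod_mul_distrib
      rw [hdd, mul_pow]
      have h1' : d' i ^ (m-1) = ∏ v ∈ e.erase i, d' v := mul_left_cancel₀ hrC h1
      rw [h1']
      calc l * (d₀ i ^ (m-1) * ∏ v ∈ e.erase i, d' v)
          = (l * d₀ i ^ (m-1)) * ∏ v ∈ e.erase i, d' v := by ring
      _ = ((r:ℂ) * ∏ v ∈ e.erase i, d₀ v) * ∏ v ∈ e.erase i, d' v := by rw [h2]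
      _ = (r:ℂ) * ((∏ v ∈ e.erase i, d₀ v) * ∏ v ∈ e.erase i, d' v) := by ring

end Count


/-- For a connected `m`-uniform hypergraph `G` with at least one edge, all projective
eigenvarieties at eigenvalues of modulus `ρ` are finite with the same cardinality. -/
theorem stmt18 {n m : ℕ} (hm : 2 ≤ m) (E : Finset (Finset (Fin n)))
    (hunif : ∀ e ∈ E, e.card = m) (hE : E.Nonempty)
    (hconn : ∀ u w : Fin n, HConn E u w) :
    ∀ l ∈ Eigenvalues (adjT n m E), ‖l‖ = specRad (adjT n m E) →
      (PV (adjT n m E) l).Finite ∧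
      (PV (adjT n m E) l).ncard = (PV (adjT n m E) ((specRad (adjT n m E) : ℝ) : ℂ)).ncard := by
  intro l hl habs
  have hm0 : m ≠ 0 := by omega
  obtain ⟨e₀, he₀⟩ := hE
  have he₀ne : e₀.Nonempty := Finset.card_pos.mp (by rw [hunif e₀ he₀]; omega)
  obtain ⟨i₀, -⟩ := he₀ne
  obtain ⟨y, r, hr, hy, heig, -, -⟩ := perron hm E hunif ⟨e₀, he₀⟩ hconn
  have hyne : (fun i => ((y i : ℝ) : ℂ)) ≠ 0 := by
    intro h
    have := congrFun h i₀
    simp only [Pi.zero_apply, Complex.ofReal_eq_zero] at this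
    exact absurd this (ne_of_gt (hy i₀))
  have hspec : specRad (adjT n m E) = r := specRad_eq hm E hunif i₀ hr hy heig
  rw [hspec] at habs ⊢
  have hl0 : l ≠ 0 := by
    intro h
    rw [h, norm_zero] at habs
    exact absurd habs.symm (ne_of_gt hr)
  have hrabs : ‖((r : ℝ) : ℂ)‖ = r := by
    rw [Complex.norm_real, Real.norm_eq_abs, abs_of_pos hr]
  have hPVl := pv_eq hm E hunif hconn i₀ hr hy heig hyne l habs
  have hPVr := pv_eq hm E hunif hconn i₀ hr hy heig hyne ((r : ℝ) : ℂ) hrabs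
  have hTfin : (Tset E m r i₀ l).Finite := tset_finite hm0 E r i₀ l
  have hTfinr : (Tset E m r i₀ ((r : ℝ) : ℂ)).Finite := tset_finite hm0 E r i₀ _
  have hfin : (PV (adjT n m E) l).Finite := by
    rw [hPVl]
    exact hTfin.image _
  refine ⟨hfin, ?_⟩
  -- d₀ exists
  have hTne : (Tset E m r i₀ l).Nonempty := by
    obtain ⟨x, hx0, hxe⟩ := hl
    have hp : Projectivization.mk ℂ x hx0 ∈ PV (adjT n m E) l := ⟨x, hx0, rfl, hxe⟩
    rw [hPVl] at hp
    obtain ⟨d, hd, -⟩ := hp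
    exact ⟨d, hd⟩
  obtain ⟨d₀, hd₀⟩ := hTne
  have hd₀ne : ∀ i, d₀ i ≠ 0 := by
    intro i h
    have := hd₀.2.1 i
    rw [h] at this
    simp [zero_pow hm0] at this
  have h1 : (PV (adjT n m E) l).ncard = (Tset E m r i₀ l).ncard := by
    rw [hPVl]
    exact Set.ncard_image_of_injOn (gmap_injOn E r i₀ hy hyne l)
  have h2 : (PV (adjT n m E) ((r : ℝ) : ℂ)).ncard = (Tset E m r i₀ ((r : ℝ) : ℂ)).ncard := by
    rw [hPVr]
    exact Set.ncard_image_of_injOn (gmap_injOn E r i₀ hy hyne _)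
  have hinj : Function.Injective (fun d : Fin n → ℂ => fun i => d₀ i * d i) := by
    intro a b h
    funext i
    have := congrFun h i
    exact mul_left_cancel₀ (hd₀ne i) this
  have h3 : (Tset E m r i₀ l).ncard = (Tset E m r i₀ ((r : ℝ) : ℂ)).ncard := by
    rw [tset_translate hm E i₀ hr hl0 hd₀]
    exact Set.ncard_image_of_injective _ hinj
  rw [h1, h2, h3]


end PaperTensor
end
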